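/- arXiv:2106.05334 — 11 statements merged into one kernel-verified Lean document; each statement's English description precedes it below -/
import Mathlib

section
/- Let C and D be categories and let F₀ : D ⥤ C and G₀ : C ⥤ D form an adjunction F₀ ⊣ G₀, and let F : σD ⥤ σC and G : σC ⥤ σD be the induced functors on categories of difference objects (postcomposition with F₀ and G₀). If G₀ is monadic, then G is monadic. -/
/-!
If `F₀ ⊣ G₀` and `G₀` is monadic, then the induced functor `G` on the categories of
difference objects (realized as functor categories out of `SingleObj (Multiplicative ℕ)`),
given by postcomposition with `G₀`, is monadic.
-/

open CategoryTheory

namespace DifferenceMonadicAux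

open CategoryTheory.Monad

universe v₁ v₂ v₃ u₁ u₂ u₃

variable {J : Type u₃} [Category.{v₃} J]
variable {C : Type u₁} {D : Type u₂} [Category.{v₁} C] [Category.{v₂} D]
variable (G₀ : C ⥤ D) [MonadicRightAdjoint G₀]

noncomputable section

variable (J) in
/-- The adjunction between the whiskered functors induced by the monadic adjunction of `G₀`. -/
def adjW : (Functor.whiskeringRight J D C).obj (monadicLeftAdjoint G₀) ⊣
    (Functor.whiskeringRight J C D).obj G₀ :=
  (monadicAdjunction G₀).whiskerRight J

instance : G₀.Faithful :=
  Functor.Faithful.of_iso (Monad.comparisonForget (monadicAdjunction G₀))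

/-- The pointwise algebra structure underlying an algebra for the whiskered monad. -/
def ptAlg (B : (adjW J G₀).toMonad.Algebra) (j : J) :
    (monadicAdjunction G₀).toMonad.Algebra where
  A := B.A.obj j
  a := B.a.app j
  unit := by
    have := congrArg (fun t => NatTrans.app t j) B.unit
    simp [adjW] at this
    exact this
  assoc := by
    have := congrArg (fun t => NatTrans.app t j) B.assoc
    simp [adjW] at this
    erw [NatTrans.comp_app, Functor.whiskerRight_app, Adjunction.whiskerRight_counit_app_app] at this
    exact this

/-- An algebra for the whiskered monad, as a functor into pointwise algebras. -/
def ptFunctor (B : (adjW J G₀).toMonad.Algebra) :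
    J ⥤ (monadicAdjunction G₀).toMonad.Algebra where
  obj j := ptAlg G₀ B j
  map {j j'} φ :=
    { f := B.A.map φ
      h := B.a.naturality φ }
  map_id j := by apply Monad.Algebra.Hom.ext; simp [ptAlg]
  map_comp φ ψ := by apply Monad.Algebra.Hom.ext; simp [ptAlg]

instance : (Monad.comparison (adjW J G₀)).Full where
  map_surjective {X Y} h := by
    letI ff : (Monad.comparison (monadicAdjunction G₀)).FullyFaithful :=
      Functor.FullyFaithful.ofFullyFaithful _
    have hpt : ∀ j : J,
        (monadicAdjunction G₀).toMonad.map (h.f.app j) ≫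
          ((Monad.comparison (monadicAdjunction G₀)).obj (Y.obj j)).a =
        ((Monad.comparison (monadicAdjunction G₀)).obj (X.obj j)).a ≫ h.f.app j := by
      intro j
      have := congrArg (fun t => NatTrans.app t j) h.h
      simp [adjW] at this
      have e : ∀ Z : J ⥤ C, (Functor.whiskerRight
          ((Adjunction.whiskerRight J (monadicAdjunction G₀)).counit.app Z) G₀).app j =
          G₀.map ((monadicAdjunction G₀).counit.app (Z.obj j)) := fun Z => by simp
      erw [NatTrans.comp_app, NatTrans.comp_app] at this
      erw [e, e] at this
      exact this
    let hj : ∀ j : J, (Monad.comparison (monadicAdjunction G₀)).obj (X.obj j) ⟶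
        (Monad.comparison (monadicAdjunction G₀)).obj (Y.obj j) :=
      fun j => ⟨h.f.app j, hpt j⟩
    have hGf : ∀ j : J, G₀.map (ff.preimage (hj j)) = h.f.app j := by
      intro j
      exact congrArg Monad.Algebra.Hom.f (ff.map_preimage (hj j))
    refine ⟨{ app := fun j => ff.preimage (hj j), naturality := ?_ }, ?_⟩
    · intro j j' φ
      apply G₀.map_injective
      rw [G₀.map_comp, G₀.map_comp, hGf, hGf]
      exact h.f.naturality φ
    · apply Monad.Algebra.Hom.ext
      ext j
      exact hGf j

instance : (Monad.comparison (adjW J G₀)).EssSurj where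
  mem_essImage B := by
    let e := (Monad.comparison (monadicAdjunction G₀)).asEquivalence
    let P := ptFunctor G₀ B
    refine ⟨P ⋙ e.inverse, ⟨Monad.Algebra.isoMk (NatIso.ofComponents
      (fun j => (Monad.forget _).mapIso (e.counitIso.app (P.obj j))) ?_) ?_⟩⟩
    · intro j j' φ
      exact
        congrArg Monad.Algebra.Hom.f (e.counitIso.hom.naturality (P.map φ))
    · ext j
      have := (e.counitIso.hom.app (P.obj j)).h
      have e2 : (Functor.whiskerRight ((Adjunction.whiskerRight J (monadicAdjunction G₀)).counit.app
          (P ⋙ e.inverse)) G₀).app j =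
          G₀.map ((monadicAdjunction G₀).counit.app ((P ⋙ e.inverse).obj j)) := by simp
      erw [NatTrans.comp_app, NatTrans.comp_app, e2]
      exact this

/-- The whiskering of a monadic functor is monadic. -/
def whiskMonadic : MonadicRightAdjoint ((Functor.whiskeringRight J C D).obj G₀) where
  L := (Functor.whiskeringRight J D C).obj (monadicLeftAdjoint G₀)
  adj := adjW J G₀
  eqv := {}

end

end DifferenceMonadicAux

theorem difference_monadic {C : Type*} {D : Type*} [Category C] [Category D]
    (F₀ : D ⥤ C) (G₀ : C ⥤ D) (adj : F₀ ⊣ G₀) [MonadicRightAdjoint G₀] :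
    Nonempty
      (MonadicRightAdjoint ((Functor.whiskeringRight (SingleObj (Multiplicative ℕ)) C D).obj G₀)) := by
  exact ⟨DifferenceMonadicAux.whiskMonadic G₀⟩
end

section
/- Let C be a category in which every slice category has countable products (equivalently, C has countable wide pullbacks). Then for every difference object (S, σ_S) of σC, the functor from the slice category of σC over (S, σ_S) to the slice category of C over S induced by the forgetful functor |·| : σC ⥤ C admits a right adjoint. -/
/-!
If every slice category of `C` has countable products (equivalently, `C` has countable wide
pullbacks), then for every difference object `S` of `σC` the induced functor on slice
categories `(σC)/S ⥤ C/|S|` (given by `Over.post` applied to the forgetful functor,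
i.e. evaluation at the unique object) admits a right adjoint, i.e. it is a left adjoint.
-/

open CategoryTheory CategoryTheory.Limits

set_option linter.unusedSectionVars false

namespace DiffAux

noncomputable section

variable {C : Type*} [Category C] (S : SingleObj (Multiplicative ℕ) ⥤ C)

abbrev pt : SingleObj (Multiplicative ℕ) := SingleObj.star (Multiplicative ℕ)

abbrev s0 : C := S.obj (pt)

def a (n : ℕ) : s0 S ⟶ s0 S := S.map (Multiplicative.ofAdd n)

lemma a_zero : a S 0 = 𝟙 _ := S.map_id _

lemma a_add (n m : ℕ) : a S n ≫ a S m = a S (n + m) := by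
  rw [a, a, a, ← S.map_comp]
  congr 1
  rw [SingleObj.comp_as_mul, ← ofAdd_add, add_comm]

variable [∀ X : C, Limits.HasCountableProducts (Over X)] (Y : Over (s0 S))

def P (n : ℕ) : Over (s0 S) := Over.mk (a S n) ⨯ Y

def fst (n : ℕ) : (P S Y n).left ⟶ s0 S :=
  (Limits.prod.fst : P S Y n ⟶ Over.mk (a S n)).left

def snd (n : ℕ) : (P S Y n).left ⟶ Y.left :=
  (Limits.prod.snd : P S Y n ⟶ Y).left

lemma fst_w (n : ℕ) : fst S Y n ≫ a S n = (P S Y n).hom :=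
  Over.w (Limits.prod.fst : P S Y n ⟶ Over.mk (a S n))

lemma snd_w (n : ℕ) : snd S Y n ≫ Y.hom = (P S Y n).hom :=
  Over.w (Limits.prod.snd : P S Y n ⟶ Y)

def plift (n : ℕ) {T : C} (p : T ⟶ s0 S) (q : T ⟶ Y.left)
    (h : p ≫ a S n = q ≫ Y.hom) : T ⟶ (P S Y n).left :=
  (Limits.prod.lift (Over.homMk p rfl : Over.mk (p ≫ a S n) ⟶ Over.mk (a S n))
    (Over.homMk q h.symm)).left

lemma plift_fst (n : ℕ) {T : C} (p : T ⟶ s0 S) (q : T ⟶ Y.left)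
    (h : p ≫ a S n = q ≫ Y.hom) : plift S Y n p q h ≫ fst S Y n = p :=
  congrArg CommaMorphism.left
    (Limits.prod.lift_fst (Over.homMk p rfl : Over.mk (p ≫ a S n) ⟶ Over.mk (a S n))
      (Over.homMk q h.symm))

lemma plift_snd (n : ℕ) {T : C} (p : T ⟶ s0 S) (q : T ⟶ Y.left)
    (h : p ≫ a S n = q ≫ Y.hom) : plift S Y n p q h ≫ snd S Y n = q :=
  congrArg CommaMorphism.left
    (Limits.prod.lift_snd (Over.homMk p rfl : Over.mk (p ≫ a S n) ⟶ Over.mk (a S n))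
      (Over.homMk q h.symm))

lemma P_hom_ext (n : ℕ) {T : C} {m m' : T ⟶ (P S Y n).left}
    (h1 : m ≫ fst S Y n = m' ≫ fst S Y n) (h2 : m ≫ snd S Y n = m' ≫ snd S Y n) :
    m = m' := by
  have hm' : m' ≫ (P S Y n).hom = m ≫ (P S Y n).hom := by
    rw [← fst_w, ← Category.assoc, ← Category.assoc, h1]
  have e : (Over.homMk m rfl : Over.mk (m ≫ (P S Y n).hom) ⟶ P S Y n) = Over.homMk m' hm' := by
    apply Limits.prod.hom_ext
    · apply Over.OverMorphism.ext
      exact h1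
    · apply Over.OverMorphism.ext
      exact h2
  exact congrArg CommaMorphism.left e

def Z (n : ℕ) : Over (s0 S) := Over.mk (fst S Y n)

def R : Over (s0 S) := ∏ᶜ (fun n => Z S Y n)

def pr (n : ℕ) : (R S Y).left ⟶ (P S Y n).left := (Pi.π (fun n => Z S Y n) n).left

lemma pr_fst (n : ℕ) : pr S Y n ≫ fst S Y n = (R S Y).hom :=
  Over.w (Pi.π (fun n => Z S Y n) n)

def rlift {T : C} (t : T ⟶ s0 S) (u : ∀ n, T ⟶ (P S Y n).left)
    (h : ∀ n, u n ≫ fst S Y n = t) : T ⟶ (R S Y).left :=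
  (Pi.lift (fun n => (Over.homMk (u n) (h n) : Over.mk t ⟶ Z S Y n))).left

lemma rlift_pr {T : C} (t : T ⟶ s0 S) (u : ∀ n, T ⟶ (P S Y n).left)
    (h : ∀ n, u n ≫ fst S Y n = t) (n : ℕ) : rlift S Y t u h ≫ pr S Y n = u n :=
  congrArg CommaMorphism.left
    (Pi.lift_π (fun n => (Over.homMk (u n) (h n) : Over.mk t ⟶ Z S Y n)) n)

lemma R_hom_ext {T : C} {m m' : T ⟶ (R S Y).left}
    (h : ∀ n, m ≫ pr S Y n = m' ≫ pr S Y n) : m = m' := by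
  have hm' : m' ≫ (R S Y).hom = m ≫ (R S Y).hom := by
    rw [← pr_fst S Y 0, ← Category.assoc, ← Category.assoc, h 0]
  have e : (Over.homMk m rfl : Over.mk (m ≫ (R S Y).hom) ⟶ R S Y) = Over.homMk m' hm' := by
    apply Limits.Pi.hom_ext
    intro n
    apply Over.OverMorphism.ext
    exact h n
  exact congrArg CommaMorphism.left e

def shift (n : ℕ) : (P S Y (n + 1)).left ⟶ (P S Y n).left :=
  plift S Y n (fst S Y (n + 1) ≫ a S 1) (snd S Y (n + 1)) (by
    rw [Category.assoc, a_add, add_comm 1 n, fst_w, snd_w])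

lemma shift_fst (n : ℕ) : shift S Y n ≫ fst S Y n = fst S Y (n + 1) ≫ a S 1 :=
  plift_fst _ _ _ _ _ _

lemma shift_snd (n : ℕ) : shift S Y n ≫ snd S Y n = snd S Y (n + 1) :=
  plift_snd _ _ _ _ _ _

def σR : (R S Y).left ⟶ (R S Y).left :=
  rlift S Y ((R S Y).hom ≫ a S 1) (fun n => pr S Y (n + 1) ≫ shift S Y n) (fun n => by
    rw [Category.assoc, shift_fst, ← Category.assoc, pr_fst])

lemma σR_pr (n : ℕ) : σR S Y ≫ pr S Y n = pr S Y (n + 1) ≫ shift S Y n :=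
  rlift_pr _ _ _ _ _ _

lemma σR_w : σR S Y ≫ (R S Y).hom = (R S Y).hom ≫ a S 1 := by
  rw [← pr_fst S Y 0, ← Category.assoc, σR_pr, Category.assoc, shift_fst, ← Category.assoc,
    pr_fst, pr_fst]

def sig : ℕ → ((R S Y).left ⟶ (R S Y).left)
  | 0 => 𝟙 _
  | n + 1 => σR S Y ≫ sig n

lemma σR_sig (n : ℕ) : σR S Y ≫ sig S Y n = sig S Y n ≫ σR S Y := by
  induction n with
  | zero => simp [sig]
  | succ n ih =>
      show σR S Y ≫ (σR S Y ≫ sig S Y n) = (σR S Y ≫ sig S Y n) ≫ σR S Y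
      calc σR S Y ≫ (σR S Y ≫ sig S Y n) = σR S Y ≫ (sig S Y n ≫ σR S Y) := by rw [ih]
        _ = (σR S Y ≫ sig S Y n) ≫ σR S Y := by rw [Category.assoc]

lemma sig_add (m n : ℕ) : sig S Y (m + n) = sig S Y m ≫ sig S Y n := by
  induction n with
  | zero => simp [sig]
  | succ n ih =>
      show sig S Y ((m + n) + 1) = sig S Y m ≫ (σR S Y ≫ sig S Y n)
      calc sig S Y ((m + n) + 1) = σR S Y ≫ sig S Y (m + n) := rfl
        _ = σR S Y ≫ (sig S Y m ≫ sig S Y n) := by rw [ih]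
        _ = (σR S Y ≫ sig S Y m) ≫ sig S Y n := by rw [Category.assoc]
        _ = (sig S Y m ≫ σR S Y) ≫ sig S Y n := by rw [σR_sig]
        _ = sig S Y m ≫ (σR S Y ≫ sig S Y n) := by rw [Category.assoc]

lemma sig_w (n : ℕ) : sig S Y n ≫ (R S Y).hom = (R S Y).hom ≫ a S n := by
  induction n with
  | zero => simp [sig, a_zero]
  | succ n ih =>
      rw [sig, Category.assoc, ih, ← Category.assoc, σR_w, Category.assoc, a_add, add_comm 1 n]

lemma sig_pr_snd (n : ℕ) :
    sig S Y n ≫ pr S Y 0 ≫ snd S Y 0 = pr S Y n ≫ snd S Y n := by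
  induction n with
  | zero => simp [sig]
  | succ n ih =>
      rw [sig, Category.assoc, ih, ← Category.assoc, σR_pr, Category.assoc, shift_snd]

def sigHom : Multiplicative ℕ →* End ((R S Y).left) := powersHom _ (σR S Y)

lemma sig_eq (n : ℕ) : sig S Y n = sigHom S Y (Multiplicative.ofAdd n) := by
  induction n with
  | zero => simp [sig, sigHom]
  | succ n ih =>
      show σR S Y ≫ sig S Y n = _
      rw [ih]
      simp [sigHom, pow_succ, End.mul_def]

def Rfun : SingleObj (Multiplicative ℕ) ⥤ C :=
  SingleObj.functor (sigHom S Y)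

lemma Rfun_map (m : Multiplicative ℕ) :
    (Rfun S Y).map (X := DiffAux.pt) (Y := DiffAux.pt) m = sig S Y m.toAdd := by
  rw [sig_eq]
  simp [Rfun]
  rfl

def RS : Rfun S Y ⟶ S :=
  SingleObj.natTrans (M := Multiplicative ℕ) (R S Y).hom (fun m => by
    erw [show (Rfun S Y).map (X := DiffAux.pt) (Y := DiffAux.pt) m = sig S Y m.toAdd from
      Rfun_map S Y m, sig_w]
    rfl)

def Robj : Over S := Over.mk (RS S Y)

lemma Robj_map (n : ℕ) :
    (Robj S Y).left.map (X := DiffAux.pt) (Y := DiffAux.pt) (Multiplicative.ofAdd n)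
      = sig S Y n :=
  Rfun_map S Y (Multiplicative.ofAdd n)

def ev : (SingleObj (Multiplicative ℕ) ⥤ C) ⥤ C :=
  (evaluation (SingleObj (Multiplicative ℕ)) C).obj (pt)

def counit : (Over.post (X := S) (ev (C := C))).obj (Robj S Y) ⟶ Y :=
  Over.homMk (pr S Y 0 ≫ snd S Y 0) (by
    show (pr S Y 0 ≫ snd S Y 0) ≫ Y.hom = (R S Y).hom
    rw [Category.assoc, snd_w, ← fst_w, a_zero, Category.comp_id, pr_fst])

section

variable (X : Over S) (u : (Over.post (X := S) (ev (C := C))).obj X ⟶ Y)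

def f0 : X.left.obj (pt) ⟶ s0 S := X.hom.app (pt)

def sx (n : ℕ) : X.left.obj (pt) ⟶ X.left.obj (pt) :=
  X.left.map (X := pt) (Y := pt) (Multiplicative.ofAdd n)

lemma sx_zero : sx S X 0 = 𝟙 _ := X.left.map_id _

lemma sx_one_add (n : ℕ) : sx S X 1 ≫ sx S X n = sx S X (n + 1) := by
  rw [sx, sx, sx, ← X.left.map_comp]
  congr 1

lemma sx_w (n : ℕ) : sx S X n ≫ f0 S X = f0 S X ≫ a S n :=
  X.hom.naturality (Multiplicative.ofAdd n)

lemma u_w : u.left ≫ Y.hom = f0 S X := Over.w u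

lemma comp_n_w (n : ℕ) : f0 S X ≫ a S n = (sx S X n ≫ u.left) ≫ Y.hom := by
  erw [Category.assoc, u_w, sx_w]

def comp_n (n : ℕ) : X.left.obj (pt) ⟶ (P S Y n).left :=
  plift S Y n (f0 S X) (sx S X n ≫ u.left) (comp_n_w S Y X u n)

lemma comp_fst (n : ℕ) : comp_n S Y X u n ≫ fst S Y n = f0 S X :=
  plift_fst _ _ _ _ _ _

lemma comp_snd (n : ℕ) : comp_n S Y X u n ≫ snd S Y n = sx S X n ≫ u.left :=
  plift_snd _ _ _ _ _ _

def phi0 : X.left.obj (pt) ⟶ (R S Y).left :=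
  rlift S Y (f0 S X) (comp_n S Y X u) (comp_fst S Y X u)

lemma phi0_pr (n : ℕ) : phi0 S Y X u ≫ pr S Y n = comp_n S Y X u n :=
  rlift_pr _ _ _ _ _ _

lemma phi0_w : phi0 S Y X u ≫ (R S Y).hom = f0 S X := by
  rw [← pr_fst S Y 0, ← Category.assoc, phi0_pr, comp_fst]

lemma key1 : sx S X 1 ≫ phi0 S Y X u = phi0 S Y X u ≫ σR S Y := by
  apply R_hom_ext
  intro n
  calc (sx S X 1 ≫ phi0 S Y X u) ≫ pr S Y n
      = sx S X 1 ≫ comp_n S Y X u n := by rw [Category.assoc, phi0_pr]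
    _ = comp_n S Y X u (n + 1) ≫ shift S Y n := by
        apply P_hom_ext
        · rw [Category.assoc, comp_fst, sx_w, Category.assoc, shift_fst, ← Category.assoc,
            comp_fst]
        · erw [Category.assoc, comp_snd, ← Category.assoc, sx_one_add, Category.assoc, shift_snd,
            comp_snd]
    _ = (phi0 S Y X u ≫ σR S Y) ≫ pr S Y n := by
        rw [Category.assoc, σR_pr, ← Category.assoc, phi0_pr]

lemma key_n (n : ℕ) : sx S X n ≫ phi0 S Y X u = phi0 S Y X u ≫ sig S Y n := by
  induction n with
  | zero => rw [sx_zero, Category.id_comp]; exact (Category.comp_id _).symm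
  | succ n ih =>
      calc sx S X (n + 1) ≫ phi0 S Y X u
          = sx S X 1 ≫ (sx S X n ≫ phi0 S Y X u) := by
            rw [← Category.assoc, sx_one_add]
        _ = sx S X 1 ≫ (phi0 S Y X u ≫ sig S Y n) := by rw [ih]
        _ = (sx S X 1 ≫ phi0 S Y X u) ≫ sig S Y n := (Category.assoc _ _ _).symm
        _ = (phi0 S Y X u ≫ σR S Y) ≫ sig S Y n := by rw [key1]
        _ = phi0 S Y X u ≫ (σR S Y ≫ sig S Y n) := Category.assoc _ _ _

def phi : X.left ⟶ Rfun S Y :=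
  SingleObj.natTrans (M := Multiplicative ℕ) (phi0 S Y X u) (fun m => by
    rw [show (Rfun S Y).map (X := DiffAux.pt) (Y := DiffAux.pt) m = sig S Y m.toAdd from
      Rfun_map S Y m]
    exact key_n S Y X u m.toAdd)

def Phi : X ⟶ Robj S Y :=
  Over.homMk (phi S Y X u) (by
    apply NatTrans.ext
    funext j
    exact phi0_w S Y X u)

lemma fac : (Over.post (X := S) (ev (C := C))).map (Phi S Y X u) ≫ counit S Y = u := by
  apply Over.OverMorphism.ext
  show phi0 S Y X u ≫ (pr S Y 0 ≫ snd S Y 0) = u.left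
  erw [← Category.assoc, phi0_pr, comp_snd, sx_zero, Category.id_comp]

lemma uniq (m : X ⟶ Robj S Y)
    (hm : (Over.post (X := S) (ev (C := C))).map m ≫ counit S Y = u) :
    m = Phi S Y X u := by
  have hw : m.left.app (pt) ≫ (R S Y).hom = f0 S X :=
    NatTrans.congr_app (Over.w m) (pt)
  have hnat : ∀ n : ℕ, sx S X n ≫ m.left.app (pt) = m.left.app (pt) ≫ sig S Y n := by
    intro n
    have h := m.left.naturality (X := pt) (Y := pt) (Multiplicative.ofAdd n)
    rw [Robj_map] at h
    exact h
  have hc : m.left.app (pt) ≫ (pr S Y 0 ≫ snd S Y 0) = u.left :=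
    congrArg CommaMorphism.left hm
  have h0 : m.left.app (pt) = phi0 S Y X u := by
    apply R_hom_ext
    intro n
    apply P_hom_ext
    · erw [Category.assoc, Category.assoc, pr_fst, hw, phi0_w]
    · have l1 : (m.left.app (pt) ≫ pr S Y n) ≫ snd S Y n = sx S X n ≫ u.left := by
        calc (m.left.app (pt) ≫ pr S Y n) ≫ snd S Y n
            = m.left.app (pt) ≫ (pr S Y n ≫ snd S Y n) := Category.assoc _ _ _
          _ = m.left.app (pt) ≫ (sig S Y n ≫ (pr S Y 0 ≫ snd S Y 0)) := by
              erw [sig_pr_snd]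
              rfl
          _ = (m.left.app (pt) ≫ sig S Y n) ≫ (pr S Y 0 ≫ snd S Y 0) :=
              (Category.assoc _ _ _).symm
          _ = (sx S X n ≫ m.left.app (pt)) ≫ (pr S Y 0 ≫ snd S Y 0) := by rw [hnat]; rfl
          _ = sx S X n ≫ (m.left.app (pt) ≫ (pr S Y 0 ≫ snd S Y 0)) := Category.assoc _ _ _
          _ = sx S X n ≫ u.left := by rw [hc]
      erw [l1, phi0_pr, comp_snd]
  apply Over.OverMorphism.ext
  apply NatTrans.ext
  funext j
  exact h0

end

def isTermObj : CostructuredArrow (Over.post (X := S) (ev (C := C))) Y :=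
  CostructuredArrow.mk (counit S Y)

def isTerm : @Limits.IsTerminal _ (instCategoryCostructuredArrow_1 _ _) (isTermObj S Y) :=
  @Limits.IsTerminal.ofUniqueHom _ (instCategoryCostructuredArrow_1 _ _) _
    (fun B => CostructuredArrow.homMk (Phi S Y B.left B.hom) (fac S Y B.left B.hom))
    (fun B k => by
      apply CostructuredArrow.hom_ext
      exact uniq S Y B.left B.hom k.left (CostructuredArrow.w k))

end

end DiffAux

open DiffAux in
theorem difference_slice_forget_isLeftAdjoint {C : Type*} [Category C]
    [∀ X : C, Limits.HasCountableProducts (Over X)]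
    (S : SingleObj (Multiplicative ℕ) ⥤ C) :
    (Over.post (X := S)
        ((evaluation (SingleObj (Multiplicative ℕ)) C).obj
          (SingleObj.star (Multiplicative ℕ)))).IsLeftAdjoint := by
  apply CategoryTheory.isLeftAdjoint_iff_hasTerminal_costructuredArrow.mpr
  intro A
  exact @Limits.IsTerminal.hasTerminal _ (instCategoryCostructuredArrow_1 _ _) _ (isTerm S A)
end

section
/- Let C be a category in which every coslice category has countable coproducts (equivalently, C has countable wide pushouts). Then for every difference object (S, σ_S) of σC, the functor from the coslice category of σC under (S, σ_S) to the coslice category of C under S induced by the forgetful functor |·| : σC ⥤ C admits a left adjoint. -/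
open CategoryTheory CategoryTheory.Limits

namespace DiffAux

noncomputable section

instance : Countable WalkingPair :=
  Countable.of_equiv Bool WalkingPair.equivBool.symm

variable {C : Type*} [Category C] [∀ X : C, HasCountableCoproducts (Under X)]

variable (S : SingleObj (Multiplicative ℕ) ⥤ C)

/-- The generator of `ℕ` as an endomorphism of the single object. -/
abbrev gen : SingleObj.star (Multiplicative ℕ) ⟶ SingleObj.star (Multiplicative ℕ) :=
  Multiplicative.ofAdd 1

abbrev genn (n : ℕ) :
    SingleObj.star (Multiplicative ℕ) ⟶ SingleObj.star (Multiplicative ℕ) :=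
  Multiplicative.ofAdd n

abbrev Om : C := S.obj (SingleObj.star (Multiplicative ℕ))

abbrev σS : Om S ⟶ Om S := S.map gen

lemma gen_comp (n : ℕ) : (gen ≫ genn n : SingleObj.star (Multiplicative ℕ) ⟶ _) = genn (n + 1) := by
  show Multiplicative.ofAdd n * Multiplicative.ofAdd 1 = Multiplicative.ofAdd (n + 1)
  rw [← ofAdd_add]

lemma map_ofAdd_succ (W : SingleObj (Multiplicative ℕ) ⥤ C) (n : ℕ) :
    W.map (genn (n + 1)) = W.map gen ≫ W.map (genn n) := by
  rw [← gen_comp n, W.map_comp]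

def pw {X : C} (f : X ⟶ X) : ℕ → (X ⟶ X)
  | 0 => 𝟙 X
  | n + 1 => f ≫ pw f n

lemma pw_succ' {X : C} (f : X ⟶ X) (n : ℕ) : pw f (n + 1) = pw f n ≫ f := by
  induction n with
  | zero => simp [pw]
  | succ n ih =>
    show f ≫ pw f (n + 1) = (f ≫ pw f n) ≫ f
    rw [ih, ← Category.assoc]

lemma pw_add {X : C} (f : X ⟶ X) (m n : ℕ) : pw f (m + n) = pw f n ≫ pw f m := by
  induction n with
  | zero => simp [pw]
  | succ n ih =>
    show f ≫ pw f (m + n) = (f ≫ pw f n) ≫ pw f m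
    rw [ih, Category.assoc]

/-- The functor `SingleObj (Multiplicative ℕ) ⥤ C` associated to an endomorphism. -/
def VFunc {X : C} (f : X ⟶ X) : SingleObj (Multiplicative ℕ) ⥤ C where
  obj _ := X
  map a := pw f a.toAdd
  map_id _ := rfl
  map_comp {x y z} a b := pw_add f b.toAdd a.toAdd

lemma nat_to_pow {X : C} (f : X ⟶ X) (h : Om S ⟶ X) (comm : σS S ≫ h = h ≫ f)
    (n : ℕ) : S.map (genn n) ≫ h = h ≫ pw f n := by
  induction n with
  | zero =>
    have h0 : genn 0 = 𝟙 (SingleObj.star (Multiplicative ℕ)) := rfl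
    rw [h0, S.map_id, Category.id_comp]
    show h = h ≫ 𝟙 X
    rw [Category.comp_id]
  | succ n ih =>
    rw [map_ofAdd_succ, Category.assoc, ih, ← Category.assoc, comm, Category.assoc]
    rfl

lemma pow_to_nat {X : C} (f : X ⟶ X) (W : SingleObj (Multiplicative ℕ) ⥤ C)
    (h : X ⟶ W.obj (SingleObj.star (Multiplicative ℕ)))
    (comm : f ≫ h = h ≫ W.map gen) (n : ℕ) :
    pw f n ≫ h = h ≫ W.map (genn n) := by
  induction n with
  | zero =>
    have h0 : genn 0 = 𝟙 (SingleObj.star (Multiplicative ℕ)) := rfl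
    rw [h0, W.map_id, Category.comp_id]
    exact Category.id_comp h
  | succ n ih =>
    show (f ≫ pw f n) ≫ h = _
    rw [Category.assoc, ih, ← Category.assoc, comm, Category.assoc, ← map_ofAdd_succ]

/-! ### The pushout gadget -/

/-- The pushout of `σS` and `B.hom`, as an object under `Ω` via the `σS`-corner. -/
abbrev FF (B : Under (Om S)) : Under (Om S) :=
  Under.mk ((coprod.inl : Under.mk (σS S) ⟶ Under.mk (σS S) ⨿ B).right)

abbrev qq (B : Under (Om S)) : B.right ⟶ (FF S B).right :=
  (coprod.inr : B ⟶ Under.mk (σS S) ⨿ B).right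

lemma FF_w (B : Under (Om S)) : σS S ≫ (FF S B).hom = B.hom ≫ qq S B := by
  have h1 := Under.w (coprod.inl : Under.mk (σS S) ⟶ Under.mk (σS S) ⨿ B)
  have h2 := Under.w (coprod.inr : B ⟶ Under.mk (σS S) ⨿ B)
  simp only [Under.mk_hom] at h1
  simp only [Under.mk_hom]
  rw [h1, ← h2]

def FFdesc {B : Under (Om S)} {W : C} (j₁ : Om S ⟶ W) (j₂ : B.right ⟶ W)
    (h : σS S ≫ j₁ = B.hom ≫ j₂) : (FF S B).right ⟶ W :=
  (coprod.desc
    (Under.homMk j₁ (by simp) : Under.mk (σS S) ⟶ Under.mk (σS S ≫ j₁))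
    (Under.homMk j₂ (by simpa using h.symm) : B ⟶ Under.mk (σS S ≫ j₁))).right

lemma FFdesc_inl {B : Under (Om S)} {W : C} (j₁ : Om S ⟶ W) (j₂ : B.right ⟶ W)
    (h : σS S ≫ j₁ = B.hom ≫ j₂) : (FF S B).hom ≫ FFdesc S j₁ j₂ h = j₁ := by
  unfold FFdesc
  rw [show (FF S B).hom
      = (coprod.inl : Under.mk (σS S) ⟶ Under.mk (σS S) ⨿ B).right from by simp,
    ← Under.comp_right, coprod.inl_desc]
  rfl

lemma FFdesc_inr {B : Under (Om S)} {W : C} (j₁ : Om S ⟶ W) (j₂ : B.right ⟶ W)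
    (h : σS S ≫ j₁ = B.hom ≫ j₂) : qq S B ≫ FFdesc S j₁ j₂ h = j₂ := by
  unfold FFdesc
  rw [show qq S B = (coprod.inr : B ⟶ Under.mk (σS S) ⨿ B).right from rfl,
    ← Under.comp_right, coprod.inr_desc]
  rfl

lemma FF_hom_ext {B : Under (Om S)} {W : C} {f g : (FF S B).right ⟶ W}
    (h1 : (FF S B).hom ≫ f = (FF S B).hom ≫ g)
    (h2 : qq S B ≫ f = qq S B ≫ g) : f = g := by
  have hZ : (Under.mk (σS S) ⨿ B).hom ≫ f = (Under.mk (σS S) ⨿ B).hom ≫ g := by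
    have hw := Under.w (coprod.inl : Under.mk (σS S) ⟶ Under.mk (σS S) ⨿ B)
    simp only [Under.mk_hom] at hw
    rw [← hw, Category.assoc, Category.assoc]
    simp only [Under.mk_hom] at h1
    rw [h1]
  let f' : Under.mk (σS S) ⨿ B ⟶ Under.mk ((Under.mk (σS S) ⨿ B).hom ≫ f) :=
    Under.homMk f rfl
  let g' : Under.mk (σS S) ⨿ B ⟶ Under.mk ((Under.mk (σS S) ⨿ B).hom ≫ f) :=
    Under.homMk g hZ.symm
  have key : f' = g' := by
    apply coprod.hom_ext
    · apply Under.UnderMorphism.ext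
      simpa [f', g'] using h1
    · apply Under.UnderMorphism.ext
      simpa [f', g'] using h2
  simpa [f', g'] using congrArg CommaMorphism.right key

/-! ### The free difference object -/

def G (A : Under (Om S)) : ℕ → Under (Om S)
  | 0 => A
  | n + 1 => FF S (G A n)

abbrev Y (A : Under (Om S)) : Under (Om S) := ∐ G S A

lemma σYaux (A : Under (Om S)) (n : ℕ) :
    (G S A n).hom ≫ (qq S (G S A n) ≫ (Sigma.ι (G S A) (n + 1)).right)
      = (Under.mk (σS S ≫ (Y S A).hom)).hom := by
  have hw := Under.w (Sigma.ι (G S A) (n + 1))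
  have hf := FF_w S (G S A n)
  erw [show (Under.mk (σS S ≫ (Y S A).hom)).hom = σS S ≫ (Y S A).hom from rfl, ← Category.assoc, ← hf, Category.assoc,
    show (FF S (G S A n)).hom = (G S A (n + 1)).hom from rfl, hw]

def σYcomp (A : Under (Om S)) (n : ℕ) : G S A n ⟶ Under.mk (σS S ≫ (Y S A).hom) :=
  Under.homMk (qq S (G S A n) ≫ (Sigma.ι (G S A) (n + 1)).right) (σYaux S A n)

def σYhom (A : Under (Om S)) : Y S A ⟶ Under.mk (σS S ≫ (Y S A).hom) :=
  Sigma.desc (σYcomp S A)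

abbrev σY (A : Under (Om S)) : (Y S A).right ⟶ (Y S A).right := (σYhom S A).right

lemma σY_w (A : Under (Om S)) : (Y S A).hom ≫ σY S A = σS S ≫ (Y S A).hom := by
  simpa using Under.w (σYhom S A)

lemma σY_ι (A : Under (Om S)) (n : ℕ) :
    (Sigma.ι (G S A) n).right ≫ σY S A
      = qq S (G S A n) ≫ (Sigma.ι (G S A) (n + 1)).right := by
  show (Sigma.ι (G S A) n).right ≫ (σYhom S A).right = _
  unfold σYhom
  rw [← Under.comp_right, Sigma.ι_desc]
  simp [σYcomp]

/-- The free difference object generated by `A`. -/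
abbrev VF (A : Under (Om S)) : SingleObj (Multiplicative ℕ) ⥤ C :=
  VFunc (σY S A)

def ηS (A : Under (Om S)) : S ⟶ VF S A :=
  SingleObj.natTrans ((Y S A).hom) (fun a =>
    nat_to_pow S (σY S A) (Y S A).hom (σY_w S A).symm a.toAdd)

abbrev evS : (SingleObj (Multiplicative ℕ) ⥤ C) ⥤ C :=
  (evaluation (SingleObj (Multiplicative ℕ)) C).obj (SingleObj.star (Multiplicative ℕ))

/-! ### Data attached to an object `B` of the coslice of `σC` -/

variable {S}

abbrev Wob (B : Under S) : C := B.right.obj (SingleObj.star (Multiplicative ℕ))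

abbrev tB (B : Under S) : Om S ⟶ Wob B := B.hom.app (SingleObj.star (Multiplicative ℕ))

abbrev βB (B : Under S) : Wob B ⟶ Wob B := B.right.map gen

lemma tB_w (B : Under S) : σS S ≫ tB B = tB B ≫ βB B := B.hom.naturality gen

variable (S)

def gg (A : Under (Om S)) (B : Under S) (g0 : A.right ⟶ Wob B)
    (hg : A.hom ≫ g0 = tB B) :
    (n : ℕ) → {h : (G S A n).right ⟶ Wob B // (G S A n).hom ≫ h = tB B}
  | 0 => ⟨g0, hg⟩
  | n + 1 =>
    ⟨FFdesc S (tB B) ((gg A B g0 hg n).1 ≫ βB B)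
        (by rw [← Category.assoc, (gg A B g0 hg n).2, tB_w]),
      FFdesc_inl S (tB B) ((gg A B g0 hg n).1 ≫ βB B)
        (by rw [← Category.assoc, (gg A B g0 hg n).2, tB_w])⟩

def ggU (A : Under (Om S)) (B : Under S) (g0 : A.right ⟶ Wob B)
    (hg : A.hom ≫ g0 = tB B) (n : ℕ) : G S A n ⟶ Under.mk (tB B) :=
  Under.homMk (gg S A B g0 hg n).1 (by simpa using (gg S A B g0 hg n).2)

def descHom (A : Under (Om S)) (B : Under S) (g0 : A.right ⟶ Wob B)
    (hg : A.hom ≫ g0 = tB B) : Y S A ⟶ Under.mk (tB B) :=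
  Sigma.desc (ggU S A B g0 hg)

lemma descHom_ι (A : Under (Om S)) (B : Under S) (g0 : A.right ⟶ Wob B)
    (hg : A.hom ≫ g0 = tB B) (n : ℕ) :
    (Sigma.ι (G S A) n).right ≫ (descHom S A B g0 hg).right = (gg S A B g0 hg n).1 := by
  unfold descHom
  rw [← Under.comp_right, Sigma.ι_desc]
  simp [ggU]

lemma descHom_w (A : Under (Om S)) (B : Under S) (g0 : A.right ⟶ Wob B)
    (hg : A.hom ≫ g0 = tB B) :
    (Y S A).hom ≫ (descHom S A B g0 hg).right = tB B := by
  simpa using Under.w (descHom S A B g0 hg)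

lemma descHom_comm (A : Under (Om S)) (B : Under S) (g0 : A.right ⟶ Wob B)
    (hg : A.hom ≫ g0 = tB B) :
    σY S A ≫ (descHom S A B g0 hg).right = (descHom S A B g0 hg).right ≫ βB B := by
  let m₁ : Y S A ⟶ Under.mk (σS S ≫ tB B) :=
    σYhom S A ≫ Under.homMk (descHom S A B g0 hg).right
      (by erw [show (Under.mk (σS S ≫ (Y S A).hom)).hom = σS S ≫ (Y S A).hom from rfl, Category.assoc, descHom_w]; simp)
  let m₂ : Y S A ⟶ Under.mk (σS S ≫ tB B) :=
    Under.homMk ((descHom S A B g0 hg).right ≫ βB B)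
      (by rw [← Category.assoc, descHom_w, tB_w]; simp)
  have key : m₁ = m₂ := by
    apply Sigma.hom_ext
    intro n
    apply Under.UnderMorphism.ext
    have lhs : (Sigma.ι (G S A) n ≫ m₁).right
        = (Sigma.ι (G S A) n).right ≫ σY S A ≫ (descHom S A B g0 hg).right := by
      simp [m₁]
    have rhs : (Sigma.ι (G S A) n ≫ m₂).right
        = (Sigma.ι (G S A) n).right ≫ (descHom S A B g0 hg).right ≫ βB B := by
      simp [m₂]
    erw [lhs, rhs, ← Category.assoc, σY_ι, Category.assoc, descHom_ι,
      ← Category.assoc, descHom_ι,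
      show (gg S A B g0 hg (n + 1)).1
        = FFdesc S (tB B) ((gg S A B g0 hg n).1 ≫ βB B)
            (by rw [← Category.assoc, (gg S A B g0 hg n).2, tB_w]) from rfl,
      FFdesc_inr]
  have := congrArg CommaMorphism.right key
  simpa [m₁, m₂] using this

/-! ### The adjunction equivalence -/

lemma post_w {A : Under (Om S)} {B : Under S}
    (g : A ⟶ (Under.post (X := S) evS).obj B) : A.hom ≫ g.right = tB B := by
  exact Under.w g

def bwd (A : Under (Om S)) (B : Under S)
    (g : A ⟶ (Under.post (X := S) evS).obj B) : Under.mk (ηS S A) ⟶ B :=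
  Under.homMk
    (SingleObj.natTrans (F := VF S A) (G := B.right)
      ((descHom S A B g.right (post_w S g)).right)
      (fun a =>
        pow_to_nat (σY S A) B.right
          (descHom S A B g.right (post_w S g)).right
          (descHom_comm S A B g.right (post_w S g)) a.toAdd))
    (by
      apply NatTrans.ext
      funext j
      simp only [NatTrans.comp_app, Under.mk_hom]
      erw [show (ηS S A).app j = (Y S A).hom from rfl,
        show (SingleObj.natTrans (F := VF S A) (G := B.right)
          ((descHom S A B g.right (post_w S g)).right)
          (fun a =>
            pow_to_nat (σY S A) B.right
              (descHom S A B g.right (post_w S g)).right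
              (descHom_comm S A B g.right (post_w S g)) a.toAdd)).app j
          = (descHom S A B g.right (post_w S g)).right from rfl,
        descHom_w S A B g.right (post_w S g)]
      rfl)

def fwd (A : Under (Om S)) (B : Under S) (f : Under.mk (ηS S A) ⟶ B) :
    A ⟶ (Under.post (X := S) evS).obj B :=
  Under.homMk
    ((Sigma.ι (G S A) 0).right ≫ f.right.app (SingleObj.star (Multiplicative ℕ)))
    (by
      have h1 := Under.w (Sigma.ι (G S A) 0)
      have h2 := congr_app (Under.w f) (SingleObj.star (Multiplicative ℕ))
      simp only [NatTrans.comp_app, Under.mk_hom] at h2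
      erw [← Category.assoc, show A.hom = (G S A 0).hom from rfl, h1]
      exact h2)

lemma fwd_component (A : Under (Om S)) (B : Under S) (f : Under.mk (ηS S A) ⟶ B)
    (n : ℕ) :
    (Sigma.ι (G S A) n).right ≫ f.right.app (SingleObj.star (Multiplicative ℕ))
      = (gg S A B (fwd S A B f).right (post_w S (fwd S A B f)) n).1 := by
  induction n with
  | zero =>
    show _ = (fwd S A B f).right
    simp [fwd]
    rfl
  | succ n ih =>
    have hη := congr_app (Under.w f) (SingleObj.star (Multiplicative ℕ))
    simp only [NatTrans.comp_app, Under.mk_hom] at hη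
    have hYw : (Y S A).hom ≫ f.right.app (SingleObj.star (Multiplicative ℕ)) = tB B := by
      exact hη
    have hnat : σY S A ≫ f.right.app (SingleObj.star (Multiplicative ℕ))
        = f.right.app (SingleObj.star (Multiplicative ℕ)) ≫ βB B := by
      have h := f.right.naturality gen
      rw [show ((Under.mk (ηS S A)).right.map gen : _) = σY S A
        from Category.comp_id _] at h
      exact h
    apply FF_hom_ext S (B := G S A n)
    · have e1 : (FF S (G S A n)).hom ≫ (Sigma.ι (G S A) (n + 1)).right
          ≫ f.right.app (SingleObj.star (Multiplicative ℕ)) = tB B := by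
        erw [← Category.assoc,
          show (FF S (G S A n)).hom ≫ (Sigma.ι (G S A) (n + 1)).right = (Y S A).hom
            from Under.w (Sigma.ι (G S A) (n + 1))]
        exact hYw
      exact e1.trans
        ((gg S A B (fwd S A B f).right (post_w S (fwd S A B f)) (n + 1)).2).symm
    · calc qq S (G S A n) ≫ (Sigma.ι (G S A) (n + 1)).right
            ≫ f.right.app (SingleObj.star (Multiplicative ℕ))
          = ((Sigma.ι (G S A) n).right ≫ σY S A)
            ≫ f.right.app (SingleObj.star (Multiplicative ℕ)) := by
            erw [σY_ι, Category.assoc]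
        _ = (Sigma.ι (G S A) n).right
            ≫ f.right.app (SingleObj.star (Multiplicative ℕ)) ≫ βB B := by
            erw [Category.assoc, hnat]
            rfl
        _ = (gg S A B (fwd S A B f).right (post_w S (fwd S A B f)) n).1 ≫ βB B := by
            erw [← Category.assoc, ih]
        _ = qq S (G S A n)
            ≫ (gg S A B (fwd S A B f).right (post_w S (fwd S A B f)) (n + 1)).1 :=
            (FFdesc_inr S (tB B)
              ((gg S A B (fwd S A B f).right (post_w S (fwd S A B f)) n).1 ≫ βB B)
              (by rw [← Category.assoc,
                (gg S A B (fwd S A B f).right (post_w S (fwd S A B f)) n).2, tB_w])).symm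

lemma bwd_fwd (A : Under (Om S)) (B : Under S) (f : Under.mk (ηS S A) ⟶ B) :
    bwd S A B (fwd S A B f) = f := by
  have hη := congr_app (Under.w f) (SingleObj.star (Multiplicative ℕ))
  simp only [NatTrans.comp_app, Under.mk_hom] at hη
  have hYw : (Y S A).hom ≫ f.right.app (SingleObj.star (Multiplicative ℕ)) = tB B := by
    exact hη
  have key : descHom S A B (fwd S A B f).right (post_w S (fwd S A B f))
      = Under.homMk (f.right.app (SingleObj.star (Multiplicative ℕ)))
          (by simpa using hYw) := by
    apply Sigma.hom_ext
    intro n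
    apply Under.UnderMorphism.ext
    have h1 := descHom_ι S A B (fwd S A B f).right (post_w S (fwd S A B f)) n
    simp only [Under.comp_right, Under.homMk_right]
    rw [h1, ← fwd_component]
    rfl
  have keyr := congrArg CommaMorphism.right key
  change _ = f.right.app (SingleObj.star (Multiplicative ℕ)) at keyr
  apply Under.UnderMorphism.ext
  apply NatTrans.ext
  funext j
  show (descHom S A B (fwd S A B f).right (post_w S (fwd S A B f))).right
      = f.right.app j
  exact keyr

lemma fwd_bwd (A : Under (Om S)) (B : Under S)
    (g : A ⟶ (Under.post (X := S) evS).obj B) : fwd S A B (bwd S A B g) = g := by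
  apply Under.UnderMorphism.ext
  show (Sigma.ι (G S A) 0).right ≫ (bwd S A B g).right.app _ = g.right
  have h := descHom_ι S A B g.right (post_w S g) 0
  exact h

lemma fwd_nat (A : Under (Om S)) (B B' : Under S) (k : B ⟶ B')
    (h : Under.mk (ηS S A) ⟶ B) :
    fwd S A B' (h ≫ k) = fwd S A B h ≫ (Under.post (X := S) evS).map k := by
  apply Under.UnderMorphism.ext
  simp [fwd]
  exact (Category.assoc _ _ _).symm

end

end DiffAux

open CategoryTheory

theorem difference_coslice_forget_isRightAdjoint {C : Type*} [Category C]
    [∀ X : C, Limits.HasCountableCoproducts (Under X)]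
    (S : SingleObj (Multiplicative ℕ) ⥤ C) :
    (Under.post (X := S)
        ((evaluation (SingleObj (Multiplicative ℕ)) C).obj
          (SingleObj.star (Multiplicative ℕ)))).IsRightAdjoint := by
  exact (CategoryTheory.Adjunction.adjunctionOfEquivLeft
    (G := Under.post (X := S) (DiffAux.evS (C := C)))
    (F_obj := fun A => Under.mk (DiffAux.ηS S A))
    (e := fun A B =>
      ⟨DiffAux.fwd S A B, DiffAux.bwd S A B,
        DiffAux.bwd_fwd S A B, DiffAux.fwd_bwd S A B⟩)
    (fun A B B' k h => DiffAux.fwd_nat S A B B' k h)).isRightAdjoint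
end

section
/- Let k be a field, let k̄ be a separable closure of k (IsSepClosure k k̄), and let A and B be ind-étale commutative k-algebras. A k-algebra homomorphism f : A → B is injective if and only if the induced map of prime spectra Spec(k̄ ⊗_k B) → Spec(k̄ ⊗_k A) — the comap of the base-changed k̄-algebra homomorphism id_{k̄} ⊗ f : k̄ ⊗_k A → k̄ ⊗_k B — is surjective. -/
/-!
Let `kbar` be a separable closure of a field `k` and let `A`, `B` be ind-étale commutative
`k`-algebras (every element is a root of a nonzero separable polynomial over `k`).
A `k`-algebra homomorphism `f : A → B` is injective if and only if the induced map
`Spec(kbar ⊗_k B) → Spec(kbar ⊗_k A)` on prime spectra is surjective.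
-/

open TensorProduct

/-- A commutative `k`-algebra is ind-étale if every element is a root of a nonzero
separable polynomial with coefficients in `k`. -/
def IsIndEtale (k A : Type*) [Field k] [CommRing A] [Algebra k A] : Prop :=
  ∀ a : A, ∃ p : Polynomial k, p ≠ 0 ∧ p.Separable ∧ Polynomial.aeval a p = 0

/-- An ind-étale algebra over a field is reduced. -/
lemma IsIndEtale.isReduced {k A : Type*} [Field k] [CommRing A] [Algebra k A]
    (hA : IsIndEtale k A) : IsReduced A := by
  constructor
  rintro a ⟨n, hn⟩
  have hanil : IsNilpotent a := ⟨n, hn⟩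
  obtain ⟨p, hp0, hsep, hroot⟩ := hA a
  by_cases hc : p.coeff 0 = 0
  · -- `X ∣ p`, write `p = X * q` with `q.coeff 0 ≠ 0`
    obtain ⟨q, hq⟩ := Polynomial.X_dvd_iff.mpr hc
    have hq0 : q.coeff 0 ≠ 0 := by
      intro h
      obtain ⟨r, hr⟩ := Polynomial.X_dvd_iff.mpr h
      have : IsUnit (Polynomial.X : Polynomial k) :=
        hsep.squarefree Polynomial.X ⟨r, by rw [hq, hr]; ring⟩
      exact Polynomial.not_isUnit_X this
    -- `aeval a q` is a unit (unit + nilpotent)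
    have hqeq : Polynomial.aeval a q =
        a * Polynomial.aeval a q.divX + algebraMap k A (q.coeff 0) := by
      have h := congrArg (Polynomial.aeval a) (Polynomial.X_mul_divX_add q)
      simp only [map_add, map_mul, Polynomial.aeval_X, Polynomial.aeval_C] at h
      exact h.symm
    have hu : IsUnit (Polynomial.aeval a q) := by
      rw [hqeq]
      exact IsNilpotent.isUnit_add_right_of_commute ((Commute.all _ _).isNilpotent_mul_right hanil)
        ((isUnit_iff_ne_zero.mpr hq0).map (algebraMap k A)) (Commute.all _ _)
    have hzero : a * Polynomial.aeval a q = 0 := by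
      have := hroot
      rw [hq] at this
      simpa using this
    exact (hu.mul_left_eq_zero).mp hzero
  · -- constant term nonzero : `aeval a p` is a unit but equals `0`, so `A` is trivial
    have hpeq : (0 : A) = a * Polynomial.aeval a p.divX + algebraMap k A (p.coeff 0) := by
      have h := congrArg (Polynomial.aeval a) (Polynomial.X_mul_divX_add p)
      simp only [map_add, map_mul, Polynomial.aeval_X, Polynomial.aeval_C] at h
      rw [← hroot]
      exact h.symm
    have hu : IsUnit (0 : A) := by
      rw [hpeq]
      exact IsNilpotent.isUnit_add_right_of_commute ((Commute.all _ _).isNilpotent_mul_right hanil)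
        ((isUnit_iff_ne_zero.mpr hc).map (algebraMap k A)) (Commute.all _ _)
    have h01 : (0 : A) = 1 := (isUnit_zero_iff.mp hu)
    calc a = a * 1 := (mul_one a).symm
    _ = a * 0 := by rw [h01]
    _ = 0 := mul_zero a

/-- The canonical map `A → kbar ⊗[k] A` is injective. -/
lemma includeRight_injective' {k kbar A : Type*} [Field k] [Field kbar] [Algebra k kbar]
    [CommRing A] [Algebra k A] :
    Function.Injective (Algebra.TensorProduct.includeRight : A →ₐ[k] kbar ⊗[k] A) := by
  have h2 := Module.Flat.rTensor_preserves_injective_linearMap (M := A)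
      (Algebra.linearMap k kbar) (algebraMap k kbar).injective
  have key : ∀ a : A,
      (Algebra.linearMap k kbar).rTensor A ((TensorProduct.lid k A).symm a)
        = (1 : kbar) ⊗ₜ[k] a := by
    intro a
    simp
  intro x y hxy
  apply (TensorProduct.lid k A).symm.injective
  apply h2
  rw [key, key]
  simpa using hxy

/-- If `B` is ind-étale over `k`, then `kbar ⊗[k] B` is integral over `kbar`. -/
lemma isIntegral_tensor {k kbar B : Type*} [Field k] [Field kbar] [Algebra k kbar]
    [CommRing B] [Algebra k B] (hB : IsIndEtale k B) :
    Algebra.IsIntegral kbar (kbar ⊗[k] B) := by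
  constructor
  intro x
  induction x using TensorProduct.induction_on with
  | zero => exact isIntegral_zero
  | tmul c b =>
      have hx : c ⊗ₜ[k] b = (algebraMap kbar (kbar ⊗[k] B) c) * ((1 : kbar) ⊗ₜ[k] b) := by
        simp [Algebra.TensorProduct.algebraMap_apply]
      rw [hx]
      refine isIntegral_algebraMap.mul ?_
      obtain ⟨p, hp0, _, hroot⟩ := hB b
      have halg : IsAlgebraic kbar ((1 : kbar) ⊗ₜ[k] b : kbar ⊗[k] B) := by
        refine ⟨p.map (algebraMap k kbar), ?_, ?_⟩
        · exact Polynomial.map_ne_zero hp0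
        · rw [Polynomial.aeval_map_algebraMap]
          have := Polynomial.aeval_algHom_apply
            (Algebra.TensorProduct.includeRight : B →ₐ[k] kbar ⊗[k] B) b p
          rw [hroot] at this
          simpa using this
      exact halg.isIntegral
  | add x y hx hy => exact hx.add hy

theorem injective_iff_comap_surjective
    (k kbar A B : Type*) [Field k] [Field kbar] [Algebra k kbar] [IsSepClosure k kbar]
    [CommRing A] [Algebra k A] [CommRing B] [Algebra k B]
    (hA : IsIndEtale k A) (hB : IsIndEtale k B) (f : A →ₐ[k] B) :
    Function.Injective f ↔
      Function.Surjective
        (PrimeSpectrum.comap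
          (Algebra.TensorProduct.map (AlgHom.id k kbar) f).toRingHom :
            PrimeSpectrum (kbar ⊗[k] B) → PrimeSpectrum (kbar ⊗[k] A)) := by
  set g := Algebra.TensorProduct.map (AlgHom.id k kbar) f with hg
  constructor
  · intro hf
    -- `g` is injective by flatness of `kbar` over `k`
    have hlin := Module.Flat.lTensor_preserves_injective_linearMap (M := kbar)
      f.toLinearMap hf
    have heq : ∀ x : kbar ⊗[k] A, g x = (f.toLinearMap.lTensor kbar) x := by
      intro x
      induction x using TensorProduct.induction_on with
      | zero => simp
      | tmul c a => simp [hg]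
      | add x y hx hy => rw [map_add, map_add, hx, hy]
    have hginj : Function.Injective g := by
      intro x y hxy
      apply hlin
      rw [← heq, ← heq, hxy]
    -- set up the algebra structure along `g`
    letI : Algebra (kbar ⊗[k] A) (kbar ⊗[k] B) := g.toRingHom.toAlgebra
    haveI : IsScalarTower kbar (kbar ⊗[k] A) (kbar ⊗[k] B) :=
      IsScalarTower.of_algebraMap_eq fun c => by
        show algebraMap kbar (kbar ⊗[k] B) c = g (algebraMap kbar (kbar ⊗[k] A) c)
        simp [hg, Algebra.TensorProduct.algebraMap_apply]
    haveI hIntB : Algebra.IsIntegral kbar (kbar ⊗[k] B) := isIntegral_tensor hB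
    haveI : Algebra.IsIntegral (kbar ⊗[k] A) (kbar ⊗[k] B) := by
      constructor
      intro x
      exact (Algebra.IsIntegral.isIntegral (R := kbar) x).tower_top
    intro P
    have hker : (⊥ : Ideal (kbar ⊗[k] B)).comap
        (algebraMap (kbar ⊗[k] A) (kbar ⊗[k] B)) ≤ P.asIdeal := by
      have : (⊥ : Ideal (kbar ⊗[k] B)).comap (algebraMap (kbar ⊗[k] A) (kbar ⊗[k] B))
          = RingHom.ker g.toRingHom := rfl
      rw [this, (RingHom.injective_iff_ker_eq_bot g.toRingHom).mp hginj]
      exact bot_le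
    obtain ⟨Q, -, hQprime, hQcomap⟩ :=
      Ideal.exists_ideal_over_prime_of_isIntegral P.asIdeal ⊥ hker
    exact ⟨⟨Q, hQprime⟩, PrimeSpectrum.ext hQcomap⟩
  · intro hsurj
    haveI : IsReduced A := hA.isReduced
    rw [injective_iff_map_eq_zero]
    intro a ha
    have h1 : g ((1 : kbar) ⊗ₜ[k] a) = 0 := by simp [hg, ha]
    have hnil : IsNilpotent ((1 : kbar) ⊗ₜ[k] a : kbar ⊗[k] A) := by
      rw [nilpotent_iff_mem_prime]
      intro J hJ
      obtain ⟨Q, hQ⟩ := hsurj ⟨J, hJ⟩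
      have hJQ : J = Q.asIdeal.comap g.toRingHom := congrArg PrimeSpectrum.asIdeal hQ.symm
      rw [hJQ]
      refine Ideal.mem_comap.mpr ?_
      show g ((1 : kbar) ⊗ₜ[k] a) ∈ Q.asIdeal
      rw [h1]
      exact Q.asIdeal.zero_mem
    obtain ⟨n, hn⟩ := hnil
    have htmul : (1 : kbar) ⊗ₜ[k] (a ^ n) = (0 : kbar ⊗[k] A) := by
      rw [← hn, Algebra.TensorProduct.tmul_pow, one_pow]
    have han : a ^ n = 0 := by
      apply includeRight_injective' (k := k) (kbar := kbar)
      simpa using htmul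
    exact IsReduced.eq_zero a ⟨n, han⟩
end

section
/- Let k be a field, let k̄ be a separable closure of k (IsSepClosure k k̄), and let A and B be ind-étale commutative k-algebras. A k-algebra homomorphism f : A → B is surjective if and only if the induced map of prime spectra Spec(k̄ ⊗_k B) → Spec(k̄ ⊗_k A) — the comap of the base-changed k̄-algebra homomorphism id_{k̄} ⊗ f : k̄ ⊗_k A → k̄ ⊗_k B — is injective. -/
/-!
Let `kbar` be a separable closure of a field `k` and let `A`, `B` be ind-étale commutative
`k`-algebras (every element is a root of a nonzero separable polynomial over `k`).
A `k`-algebra homomorphism `f : A → B` is surjective if and only if the induced map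
`Spec(kbar ⊗_k B) → Spec(kbar ⊗_k A)` on prime spectra is injective.
-/

open TensorProduct

open Polynomial in
/-- If an element of a `K`-algebra is killed by a split squarefree polynomial,
it lies in the `K`-span of the idempotents. -/
lemma mem_span_idem_of_nodal {K S : Type*} [Field K] [CommRing S] [Algebra K S]
    (x : S) (t : Finset K) (ht : ∏ c ∈ t, (x - algebraMap K S c) = 0) :
    x ∈ Submodule.span K {e : S | IsIdempotentElem e} := by
  classical
  rcases t.eq_empty_or_nonempty with rfl | hne
  · rw [Finset.prod_empty] at ht
    have : Subsingleton S := subsingleton_of_zero_eq_one ht.symm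
    rw [Subsingleton.elim x 0]
    exact Submodule.zero_mem _
  · set φ := algebraMap K S with hφ
    set E : K → S := fun c => ∏ c' ∈ t.erase c, (φ (c - c')⁻¹ * (x - φ c')) with hE
    have hEfact : ∀ c, E c = (∏ c' ∈ t.erase c, φ (c - c')⁻¹) * ∏ c' ∈ t.erase c, (x - φ c') :=
      fun c => Finset.prod_mul_distrib
    have hP : ∀ c ∈ t, (x - φ c) * ∏ c' ∈ t.erase c, (x - φ c') = 0 := by
      intro c hc; exact (Finset.mul_prod_erase t (fun b => x - φ b) hc).trans ht
    have hkey : ∀ c ∈ t, (x - φ c) * E c = 0 := by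
      intro c hc
      rw [hEfact, mul_left_comm, hP c hc, mul_zero]
    have horth : ∀ c ∈ t, ∀ c' ∈ t, c ≠ c' → E c * E c' = 0 := by
      intro c hc c' hc' hcc'
      have h1 : ∏ b ∈ t.erase c, (x - φ b)
          = (x - φ c') * ∏ b ∈ (t.erase c).erase c', (x - φ b) :=
        (Finset.mul_prod_erase _ _ (Finset.mem_erase.mpr ⟨hcc'.symm, hc'⟩)).symm
      have h2 : E c * E c' = ((x - φ c') * ∏ b ∈ t.erase c', (x - φ b)) *
          ((∏ b ∈ t.erase c, φ (c - b)⁻¹) * (∏ b ∈ (t.erase c).erase c', (x - φ b)) *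
            (∏ b ∈ t.erase c', φ (c' - b)⁻¹)) := by
        rw [hEfact c, hEfact c', h1]; ring
      rw [h2, hP c' hc', zero_mul]
    have hsum : ∑ c ∈ t, E c = 1 := by
      have h := Lagrange.sum_basis (Set.injOn_id (↑t : Set K)) hne
      have h2 := congrArg (aeval x) h
      rw [map_sum, map_one] at h2
      rw [← h2]
      refine Finset.sum_congr rfl fun c _ => ?_
      rw [Lagrange.basis, map_prod]
      refine Finset.prod_congr rfl fun c' _ => ?_
      simp [Lagrange.basisDivisor, hφ]
    have hidem : ∀ c ∈ t, IsIdempotentElem (E c) := by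
      intro c hc
      have h3 : E c * ∑ c' ∈ t, E c' = E c * E c := by
        rw [Finset.mul_sum]
        exact Finset.sum_eq_single_of_mem c hc
          (fun c' hc' hne' => horth c hc c' hc' (Ne.symm hne'))
      have := h3.symm
      rwa [hsum, mul_one] at this
    have hx : x = ∑ c ∈ t, c • E c := by
      have h4 : x * ∑ c ∈ t, E c = ∑ c ∈ t, c • E c := by
        rw [Finset.mul_sum]
        refine Finset.sum_congr rfl fun c hc => ?_
        have h0 := hkey c hc
        have h5 : x * E c = φ c * E c := by linear_combination h0
        rw [h5, Algebra.smul_def]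
      rw [← h4, hsum, mul_one]
    rw [hx]
    exact Submodule.sum_mem _ fun c hc => Submodule.smul_mem _ _
      (Submodule.subset_span (hidem c hc))

open Polynomial in
/-- An element of an algebra over a separably closed field `K` killed by a nonzero separable
polynomial over a subfield `k` is killed by a product of distinct linear factors over `K`. -/
lemma exists_nodal_eq_zero {k K S : Type*} [Field k] [Field K] [Algebra k K] [IsSepClosed K]
    [CommRing S] [Algebra k S] [Algebra K S] [IsScalarTower k K S]
    (x : S) (p : k[X]) (hp0 : p ≠ 0) (hps : p.Separable) (hpx : aeval x p = 0) :
    ∃ t : Finset K, ∏ c ∈ t, (x - algebraMap K S c) = 0 := by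
  classical
  set q := p.map (algebraMap k K) with hq
  have hq0 : q ≠ 0 := Polynomial.map_ne_zero hp0
  have hqs : q.Separable := hps.map
  have hsplit : q.Splits :=
    IsSepClosed.splits_codomain p hps
  have hnodup : q.roots.Nodup := nodup_roots hqs
  refine ⟨q.roots.toFinset, ?_⟩
  have hqx : aeval x q = 0 := by
    rw [hq, aeval_map_algebraMap, hpx]
  have heq := hsplit.eq_prod_roots
  have h2 : algebraMap K S q.leadingCoeff *
      (q.roots.map fun a => x - algebraMap K S a).prod = 0 := by
    have h := congrArg (aeval x) heq
    rw [hqx] at h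
    simpa [map_multiset_prod, Multiset.map_map, Function.comp_def] using h.symm
  have hu : IsUnit (algebraMap K S q.leadingCoeff) :=
    (isUnit_iff_ne_zero.mpr (leadingCoeff_ne_zero.mpr hq0)).map (algebraMap K S)
  have h3 : (q.roots.map fun a => x - algebraMap K S a).prod = 0 :=
    (hu.mul_right_eq_zero).mp h2
  rw [Finset.prod_eq_multiset_prod, Multiset.toFinset_val,
    Multiset.dedup_eq_self.mpr hnodup]
  exact h3

/-- For an integral ring map whose induced map on prime spectra is injective, every
idempotent of the target is in the range. -/
lemma idem_mem_range {R S : Type*} [CommRing R] [CommRing S] (g : R →+* S)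
    (hint : g.IsIntegral) (hinj : Function.Injective (PrimeSpectrum.comap g))
    {e : S} (he : IsIdempotentElem e) : e ∈ Set.range ⇑g := by
  letI : Algebra R S := g.toAlgebra
  have halgmap : algebraMap R S = g := rfl
  haveI : Algebra.IsIntegral R S := ⟨fun x => hint x⟩
  have he' : e * e = e := he
  have hIJ : Ideal.comap g (Ideal.span {e}) ⊔ Ideal.comap g (Ideal.span {1 - e}) = ⊤ := by
    by_contra hne
    obtain ⟨m, hm, hlem⟩ := Ideal.exists_le_maximal _ hne
    haveI := hm.isPrime
    obtain ⟨Q1, hQ1ge, hQ1p, hQ1c⟩ :=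
      Ideal.exists_ideal_over_prime_of_isIntegral m (Ideal.span {e})
        (le_trans le_sup_left hlem)
    obtain ⟨Q2, hQ2ge, hQ2p, hQ2c⟩ :=
      Ideal.exists_ideal_over_prime_of_isIntegral m (Ideal.span {1 - e})
        (le_trans le_sup_right hlem)
    have hq : (⟨Q1, hQ1p⟩ : PrimeSpectrum S) = ⟨Q2, hQ2p⟩ := by
      apply hinj
      apply PrimeSpectrum.ext
      rw [PrimeSpectrum.comap_asIdeal, PrimeSpectrum.comap_asIdeal]
      rw [← halgmap]
      exact hQ1c.trans hQ2c.symm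
    have hQQ : Q1 = Q2 := congrArg PrimeSpectrum.asIdeal hq
    have h1 : e ∈ Q1 := hQ1ge (Ideal.subset_span (Set.mem_singleton e))
    have h2 : (1 : S) - e ∈ Q1 :=
      hQQ ▸ hQ2ge (Ideal.subset_span (Set.mem_singleton _))
    exact hQ1p.ne_top ((Ideal.eq_top_iff_one _).mpr (by
      have := Q1.add_mem h1 h2
      simpa using this))
  rw [Ideal.eq_top_iff_one] at hIJ
  obtain ⟨i, hi, j, hj, hij⟩ := Submodule.mem_sup.mp hIJ
  rw [Ideal.mem_comap, Ideal.mem_span_singleton'] at hi hj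
  obtain ⟨a1, ha1⟩ := hi
  obtain ⟨a2, ha2⟩ := hj
  refine ⟨i, ?_⟩
  have h1 : g i + g j = 1 := by
    rw [← map_add, show i + j = 1 from hij, map_one]
  linear_combination (e - 1) * ha1 + e * ha2 + e * h1 + (a2 - a1) * he'

theorem surjective_iff_comap_injective
    (k kbar A B : Type*) [Field k] [Field kbar] [Algebra k kbar] [IsSepClosure k kbar]
    [CommRing A] [Algebra k A] [CommRing B] [Algebra k B]
    (hA : IsIndEtale k A) (hB : IsIndEtale k B) (f : A →ₐ[k] B) :
    Function.Surjective f ↔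
      Function.Injective
        (PrimeSpectrum.comap
          (Algebra.TensorProduct.map (AlgHom.id k kbar) f).toRingHom :
            PrimeSpectrum (kbar ⊗[k] B) → PrimeSpectrum (kbar ⊗[k] A)) := by
  classical
  haveI : IsSepClosed kbar := IsSepClosure.sep_closed k
  set g := Algebra.TensorProduct.map (AlgHom.id k kbar) f with hgdef
  constructor
  · -- forward
    intro hf
    apply PrimeSpectrum.comap_injective_of_surjective
    intro z
    induction z using TensorProduct.induction_on with
    | zero => exact ⟨0, map_zero _⟩
    | tmul c b =>
        obtain ⟨a, rfl⟩ := hf b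
        exact ⟨c ⊗ₜ a, by simp [hgdef]⟩
    | add u v hu hv =>
        obtain ⟨u', hu'⟩ := hu; obtain ⟨v', hv'⟩ := hv
        exact ⟨u' + v', by rw [map_add, hu', hv']⟩
  · -- backward
    intro hinj
    have hgalg : ∀ c : kbar,
        g (algebraMap kbar (kbar ⊗[k] A) c) = algebraMap kbar (kbar ⊗[k] B) c := by
      intro c
      simp [hgdef, Algebra.TensorProduct.algebraMap_apply]
    have hlin : ∀ (c : kbar) (z : kbar ⊗[k] A), g (c • z) = c • g z := by
      intro c z
      rw [Algebra.smul_def, map_mul, hgalg, ← Algebra.smul_def]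
    -- every `1 ⊗ b` is killed by a product of distinct linear factors over `kbar`
    have hnod : ∀ b : B, ∃ t : Finset kbar,
        ∏ c ∈ t, (((1 : kbar) ⊗ₜ[k] b) - algebraMap kbar (kbar ⊗[k] B) c) = 0 := by
      intro b
      obtain ⟨p, hp0, hps, hpb⟩ := hB b
      refine exists_nodal_eq_zero _ p hp0 hps ?_
      rw [show ((1 : kbar) ⊗ₜ[k] b)
            = (Algebra.TensorProduct.includeRight : B →ₐ[k] kbar ⊗[k] B) b from rfl,
        Polynomial.aeval_algHom_apply, hpb, map_zero]
    -- the target is spanned over `kbar` by idempotents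
    have hmemspan : ∀ x : kbar ⊗[k] B,
        x ∈ Submodule.span kbar {e : kbar ⊗[k] B | IsIdempotentElem e} := by
      intro x
      induction x using TensorProduct.induction_on with
      | zero => exact Submodule.zero_mem _
      | tmul c b =>
          obtain ⟨t, ht⟩ := hnod b
          have h1 : (c ⊗ₜ[k] b : kbar ⊗[k] B) = c • ((1 : kbar) ⊗ₜ[k] b) := by
            rw [TensorProduct.smul_tmul', smul_eq_mul, mul_one]
          rw [h1]
          exact Submodule.smul_mem _ _ (mem_span_idem_of_nodal _ t ht)
      | add u v hu hv => exact Submodule.add_mem _ hu hv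
    -- integrality of `g`
    have hIntK : ∀ x : kbar ⊗[k] B, IsIntegral kbar x := by
      intro x
      have : x ∈ integralClosure kbar (kbar ⊗[k] B) := by
        induction x using TensorProduct.induction_on with
        | zero => exact Subalgebra.zero_mem _
        | tmul c b =>
            have h1 : (c ⊗ₜ[k] b : kbar ⊗[k] B) = c • ((1 : kbar) ⊗ₜ[k] b) := by
              rw [TensorProduct.smul_tmul', smul_eq_mul, mul_one]
            rw [h1]
            refine Subalgebra.smul_mem _ ?_ _
            obtain ⟨t, ht⟩ := hnod b
            refine ⟨∏ c' ∈ t, (Polynomial.X - Polynomial.C c'),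
              Polynomial.monic_prod_of_monic _ _ (fun c' _ => Polynomial.monic_X_sub_C c'), ?_⟩
            rw [← Polynomial.aeval_def, map_prod]
            simpa using ht
        | add u v hu hv => exact Subalgebra.add_mem _ hu hv
      exact this
    have hint : (g.toRingHom).IsIntegral := by
      intro x
      obtain ⟨p, hpm, hp⟩ := hIntK x
      refine ⟨p.map (algebraMap kbar (kbar ⊗[k] A)), hpm.map _, ?_⟩
      rw [Polynomial.eval₂_map]
      rw [show (g.toRingHom.comp (algebraMap kbar (kbar ⊗[k] A)))
            = algebraMap kbar (kbar ⊗[k] B) from RingHom.ext hgalg]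
      exact hp
    -- every idempotent is in the range of `g`
    have hidem_range : ∀ e : kbar ⊗[k] B, IsIdempotentElem e → e ∈ Set.range ⇑g :=
      fun e he => idem_mem_range g.toRingHom hint hinj he
    -- `g` is surjective
    have hg_surj : Function.Surjective ⇑g := by
      intro y
      refine Submodule.span_induction (p := fun x _ => x ∈ Set.range ⇑g)
        (fun x hx => hidem_range x hx) ⟨0, map_zero _⟩
        (fun x y' _ _ ⟨u, hu⟩ ⟨v, hv⟩ => ⟨u + v, by rw [map_add, hu, hv]⟩)
        (fun c x _ ⟨u, hu⟩ => ⟨c • u, by rw [hlin, hu]⟩) (hmemspan y)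
    -- conclude that `f` is surjective
    intro b
    by_contra hb
    have hb' : b ∉ LinearMap.range f.toLinearMap := by
      simpa using hb
    set W := LinearMap.range f.toLinearMap with hW
    set v : B ⧸ W := Submodule.Quotient.mk b with hv
    have hv0 : v ≠ 0 := by
      rw [hv, Ne, Submodule.Quotient.mk_eq_zero]
      exact hb'
    obtain ⟨φ, hφ⟩ := (LinearMap.toSpanSingleton k (B ⧸ W) v).exists_leftInverse_of_injective
      (LinearMap.ker_toSpanSingleton k hv0)
    have hφv : φ v = 1 := by
      have := congrArg (fun ψ => ψ (1 : k)) hφ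
      simpa using this
    set ψ : B →ₗ[k] k := φ.comp W.mkQ with hψ
    have hψf : ∀ a : A, ψ (f a) = 0 := by
      intro a
      have : W.mkQ (f a) = 0 := by
        rw [Submodule.mkQ_apply, Submodule.Quotient.mk_eq_zero]
        exact ⟨a, rfl⟩
      rw [hψ, LinearMap.comp_apply, this, map_zero]
    set Ψ : kbar ⊗[k] B →ₗ[k] kbar ⊗[k] k := LinearMap.lTensor kbar ψ with hΨ
    have hΨg : ∀ z : kbar ⊗[k] A, Ψ (g z) = 0 := by
      intro z
      induction z using TensorProduct.induction_on with
      | zero => rw [map_zero, map_zero]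
      | tmul c a =>
          rw [hgdef]
          simp [hΨ, hψf a]
      | add u v hu hv' => rw [map_add, map_add, hu, hv', add_zero]
    obtain ⟨y, hy⟩ := hg_surj ((1 : kbar) ⊗ₜ[k] b)
    have h0 : Ψ ((1 : kbar) ⊗ₜ[k] b) = 0 := by rw [← hy]; exact hΨg y
    have h1 : Ψ ((1 : kbar) ⊗ₜ[k] b) = (1 : kbar) ⊗ₜ[k] (1 : k) := by
      rw [hΨ, LinearMap.lTensor_tmul, hψ, LinearMap.comp_apply, Submodule.mkQ_apply, ← hv, hφv]
    rw [h1] at h0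
    have h2 := congrArg (TensorProduct.rid k kbar) h0
    rw [map_zero, TensorProduct.rid_tmul, one_smul] at h2
    exact one_ne_zero h2
end

section
/- With (L, σ), k, a tuple a ∈ Lⁿ, the intermediate fields L_i, and the degrees d_i = [L_i : L_{i-1}] as in the context, the sequence (d_i)_{i≥1} is non-increasing: d_{i+1} ≤ d_i for every i ≥ 1. In particular, the sequence is eventually constant. -/
/-!
Let `(L, σ)` be a difference field, `k` a `σ`-stable subfield of `L` with `L/k` algebraic,
and `a ∈ Lⁿ` a tuple.  With `L_i` the intermediate field of `L/k` generated by the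
`σ^j (a_m)` for `j ≤ i`, the sequence of degrees `d_i = [L_i : L_{i-1}]` (for `i ≥ 1`) is
non-increasing; in particular it is eventually constant.
-/

open IntermediateField

section Aux

variable {L : Type*} [Field L]

/-- Transport between an intermediate field over one base and an intermediate field over
another base having the same underlying subfield. -/
def ringEquivOfToSubfieldEq {F1 F2 : Type*} [Field F1] [Field F2] [Algebra F1 L] [Algebra F2 L]
    {X : IntermediateField F1 L} {Y : IntermediateField F2 L}
    (h : X.toSubfield = Y.toSubfield) : ↥X ≃+* ↥Y where
  toFun x := ⟨x.1, by
    have hx : x.1 ∈ X.toSubfield := (X.mem_toSubfield x.1).2 x.2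
    rw [h] at hx
    exact (Y.mem_toSubfield x.1).1 hx⟩
  invFun y := ⟨y.1, by
    have hy : y.1 ∈ Y.toSubfield := (Y.mem_toSubfield y.1).2 y.2
    rw [← h] at hy
    exact (X.mem_toSubfield y.1).1 hy⟩
  left_inv x := rfl
  right_inv y := rfl
  map_mul' x y := rfl
  map_add' x y := rfl

/-- A subfield and its `extendScalars` have (essentially definitionally) the same elements. -/
def ringEquivExtendScalars {F0 E : Subfield L} (h : F0 ≤ E) :
    ↥E ≃+* ↥(Subfield.extendScalars h) where
  toFun x := ⟨x.1, x.2⟩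
  invFun x := ⟨x.1, x.2⟩
  left_inv x := rfl
  right_inv x := rfl
  map_mul' x y := rfl
  map_add' x y := rfl

set_option synthInstance.maxHeartbeats 1000000 in
set_option maxHeartbeats 1000000 in
/-- If every element of `L` that lies in a subfield `F` is algebraic over a subfield
`F0 ≤ E, F0 ≤ F`, then `[E ⊔ F : E] ≤ [F : F0]`. -/
theorem subfield_relrank_sup_le {E F F0 : Subfield L} (h1 : F0 ≤ E) (h2 : F0 ≤ F)
    (halg : ∀ x : L, x ∈ F → IsAlgebraic F0 x) :
    Subfield.relrank E (E ⊔ F) ≤ Subfield.relrank F0 F := by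
  rw [Subfield.relrank_eq_rank_of_le (le_sup_left : E ≤ E ⊔ F),
    Subfield.relrank_eq_rank_of_le h2]
  haveI : Algebra.IsAlgebraic ↥F0 ↥(Subfield.extendScalars h2) :=
    ⟨fun x ↦ (IntermediateField.isAlgebraic_iff).2 (halg x.1 x.2)⟩
  have key := IntermediateField.adjoin_rank_le_of_isAlgebraic_right
    (↥(Subfield.extendScalars h1)) (Subfield.extendScalars h2)
  refine le_trans (le_of_eq ?_) key
  -- the two intermediate fields have the same underlying subfield, namely `E ⊔ F`
  have hsub : (Subfield.extendScalars (le_sup_left : E ≤ E ⊔ F)).toSubfield =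
      (IntermediateField.adjoin ↥(Subfield.extendScalars h1)
        ((Subfield.extendScalars h2 : IntermediateField ↥F0 L) : Set L)).toSubfield := by
    rw [Subfield.extendScalars_toSubfield, IntermediateField.adjoin_toSubfield]
    have hrange : Set.range (algebraMap ↥(Subfield.extendScalars h1) L) = (E : Set L) := by
      ext x
      constructor
      · rintro ⟨y, rfl⟩
        exact y.2
      · intro hx
        exact ⟨⟨x, hx⟩, rfl⟩
    rw [hrange]
    have hF'coe : ((Subfield.extendScalars h2 : IntermediateField ↥F0 L) : Set L)
        = (F : Set L) := Subfield.coe_extendScalars h2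
    rw [hF'coe]
    refine le_antisymm (sup_le ?_ ?_) (Subfield.closure_le.2 ?_)
    · exact fun x hx ↦ Subfield.subset_closure (Set.mem_union_left _ hx)
    · exact fun x hx ↦ Subfield.subset_closure (Set.mem_union_right _ hx)
    · exact Set.union_subset (fun x hx ↦ le_sup_left (α := Subfield L) hx)
        (fun x hx ↦ le_sup_right (α := Subfield L) hx)
  exact Algebra.rank_eq_of_equiv_equiv (ringEquivExtendScalars h1)
    (ringEquivOfToSubfieldEq hsub) (by ext x; rfl)

end Aux

theorem limitDegree_antitone {k L : Type*} [Field k] [Field L] [Algebra k L]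
    [Algebra.IsAlgebraic k L] (σ : L →+* L)
    (hstable : ∀ c : k, ∃ c' : k, σ (algebraMap k L c) = algebraMap k L c')
    {n : ℕ} (a : Fin n → L)
    (Li : ℕ → IntermediateField k L)
    (hLi : ∀ i, Li i =
      IntermediateField.adjoin k {x : L | ∃ m : Fin n, ∃ j ≤ i, x = (⇑σ)^[j] (a m)}) :
    (∀ i : ℕ, relfinrank (Li (i + 1)) (Li (i + 2)) ≤ relfinrank (Li i) (Li (i + 1))) ∧
    ∃ N : ℕ, ∀ i ≥ N, relfinrank (Li i) (Li (i + 1)) = relfinrank (Li N) (Li (N + 1)) := by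
  classical
  set S : ℕ → Set L := fun i ↦ {x : L | ∃ m : Fin n, ∃ j ≤ i, x = (⇑σ)^[j] (a m)} with hS
  set A : ℕ → Subfield L := fun i ↦ (Li i).toSubfield with hA
  set B : ℕ → Subfield L := fun i ↦ (A i).map σ with hB
  -- generators are in `Li`
  have hSsub : ∀ i, S i ⊆ (Li i : Set L) := by
    intro i x hx
    rw [hLi i]
    exact IntermediateField.subset_adjoin k _ hx
  -- monotonicity of the `S i` and `Li i`
  have hSmono : ∀ i, S i ⊆ S (i + 1) := by
    rintro i x ⟨m, j, hj, rfl⟩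
    exact ⟨m, j, le_trans hj (Nat.le_succ i), rfl⟩
  have hLimono : ∀ i, Li i ≤ Li (i + 1) := by
    intro i
    rw [hLi i, hLi (i + 1)]
    exact IntermediateField.adjoin.mono _ _ _ (hSmono i)
  have hAmono : ∀ i, A i ≤ A (i + 1) := fun i x hx ↦ hLimono i hx
  have hBmono : ∀ i, B i ≤ B (i + 1) := by
    rintro i x hx
    rw [hB, Subfield.mem_map] at hx ⊢
    obtain ⟨y, hy, rfl⟩ := hx
    exact ⟨y, hAmono i hy, rfl⟩
  -- σ maps `A i` into `A (i+1)`
  have hmapsub : ∀ i, B i ≤ A (i + 1) := by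
    intro i
    rw [hB]
    rw [Subfield.map_le_iff_le_comap]
    have : A i = (IntermediateField.adjoin k (S i)).toSubfield :=
      congrArg IntermediateField.toSubfield (hLi i)
    rw [this, IntermediateField.adjoin_toSubfield]
    rw [Subfield.closure_le]
    rintro x (⟨c, rfl⟩ | hx)
    · obtain ⟨c', hc'⟩ := hstable c
      simp only [Subfield.coe_comap, Set.mem_preimage, SetLike.mem_coe, hc']
      exact (Li (i + 1)).algebraMap_mem c'
    · obtain ⟨m, j, hj, rfl⟩ := hx
      simp only [Subfield.coe_comap, Set.mem_preimage, SetLike.mem_coe]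
      have : σ ((⇑σ)^[j] (a m)) = (⇑σ)^[j + 1] (a m) := (Function.iterate_succ_apply' σ j _).symm
      rw [this]
      exact hSsub (i + 1) ⟨m, j + 1, Nat.succ_le_succ hj, rfl⟩
  -- `A (i+2) = A (i+1) ⊔ B (i+1)`
  have hsup : ∀ i, A (i + 2) = A (i + 1) ⊔ B (i + 1) := by
    intro i
    refine le_antisymm ?_ (sup_le (hAmono (i + 1)) (hmapsub (i + 1)))
    have : A (i + 2) = (IntermediateField.adjoin k (S (i + 2))).toSubfield :=
      congrArg IntermediateField.toSubfield (hLi (i + 2))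
    rw [this, IntermediateField.adjoin_toSubfield, Subfield.closure_le]
    rintro x (⟨c, rfl⟩ | hx)
    · exact le_sup_left (α := Subfield L) ((Li (i + 1)).algebraMap_mem c)
    · obtain ⟨m, j, hj, rfl⟩ := hx
      match j, hj with
      | 0, _ =>
        exact le_sup_left (α := Subfield L) (hSsub (i + 1) ⟨m, 0, Nat.zero_le _, rfl⟩)
      | (j' + 1), hj =>
        have hj' : j' ≤ i + 1 := Nat.succ_le_succ_iff.1 hj
        have hmem : (⇑σ)^[j'] (a m) ∈ A (i + 1) := hSsub (i + 1) ⟨m, j', hj', rfl⟩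
        have : (⇑σ)^[j' + 1] (a m) = σ ((⇑σ)^[j'] (a m)) := Function.iterate_succ_apply' σ j' _
        rw [this]
        exact le_sup_right (α := Subfield L) (Subfield.mem_map.2 ⟨_, hmem, rfl⟩)
  -- all elements of `B (i+1)` are algebraic over `B i`
  have halgB : ∀ i, ∀ x : L, x ∈ B (i + 1) → IsAlgebraic (B i) x := by
    intro i x hx
    rw [hB, Subfield.mem_map] at hx
    obtain ⟨y, hy, rfl⟩ := hx
    -- `y` is algebraic over `A i`
    have hyalg : IsAlgebraic (A i) y := by
      obtain ⟨p, hp0, hp⟩ := (Algebra.IsAlgebraic.isAlgebraic (R := k) y)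
      have hk : ∀ c : k, algebraMap k L c ∈ A i := fun c ↦ (Li i).algebraMap_mem c
      set f : k →+* (A i) := (algebraMap k L).codRestrict (A i) hk with hf
      refine ⟨p.map f, ?_, ?_⟩
      · exact Polynomial.map_ne_zero_iff f.injective |>.2 hp0
      · have hcomp : (algebraMap (A i) L).comp f = algebraMap k L := by ext c; rfl
        rw [Polynomial.aeval_def, Polynomial.eval₂_map, hcomp]
        rw [Polynomial.aeval_def] at hp
        exact hp
    exact hyalg.ringHom_of_comp_eq ((A i).equivMapOfInjective σ σ.injective) σ
      (RingEquiv.injective _) (by ext z; rfl)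
  -- the key step inequality, at the level of cardinal-valued `relrank`
  have hstep : ∀ i, relrank (Li (i + 1)) (Li (i + 2)) ≤ relrank (Li i) (Li (i + 1)) := by
    intro i
    show Subfield.relrank (A (i + 1)) (A (i + 2)) ≤ Subfield.relrank (A i) (A (i + 1))
    rw [hsup i]
    have := subfield_relrank_sup_le (hmapsub i) (hBmono i) (halgB i)
    refine le_trans this (le_of_eq ?_)
    exact Subfield.relrank_map_map (A i) (A (i + 1)) σ
  -- finiteness of each relative rank
  have hfd : ∀ i, FiniteDimensional k (Li i) := by
    intro i
    rw [hLi i]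
    have hfin : (S i).Finite := by
      have : S i ⊆ (fun p : Fin n × Fin (i + 1) ↦ (⇑σ)^[p.2] (a p.1)) '' Set.univ := by
        rintro x ⟨m, j, hj, rfl⟩
        exact ⟨(m, ⟨j, Nat.lt_succ_of_le hj⟩), Set.mem_univ _, rfl⟩
      exact Set.Finite.subset (Set.toFinite _) this
    haveI : Finite (S i) := hfin.to_subtype
    exact IntermediateField.finiteDimensional_adjoin
      (fun x _ ↦ (Algebra.IsAlgebraic.isAlgebraic x).isIntegral)
  have hlt : ∀ i, relrank (Li i) (Li (i + 1)) < Cardinal.aleph0 := by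
    intro i
    have hdvd := IntermediateField.relrank_dvd_rank_bot (Li i) (Li (i + 1))
    obtain ⟨c, hc⟩ := hdvd
    haveI := hfd (i + 1)
    have hrk : Module.rank k (Li (i + 1)) < Cardinal.aleph0 := Module.rank_lt_aleph0 k _
    have hc0 : c ≠ 0 := by
      intro h
      rw [h, mul_zero] at hc
      exact (rank_pos (R := k) (M := ↥(Li (i + 1)))).ne' hc
    calc relrank (Li i) (Li (i + 1)) ≤ relrank (Li i) (Li (i + 1)) * c :=
          Cardinal.le_mul_right hc0
      _ = Module.rank k (Li (i + 1)) := hc.symm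
      _ < Cardinal.aleph0 := hrk
  -- conclude for `relfinrank`
  have hstepfin : ∀ i, relfinrank (Li (i + 1)) (Li (i + 2)) ≤ relfinrank (Li i) (Li (i + 1)) := by
    intro i
    rw [relfinrank_eq_toNat_relrank, relfinrank_eq_toNat_relrank]
    exact Cardinal.toNat_le_toNat (hstep i) (hlt i)
  refine ⟨hstepfin, ?_⟩
  set d : ℕ → ℕ := fun i ↦ relfinrank (Li i) (Li (i + 1)) with hd
  have hanti : Antitone d := antitone_nat_of_succ_le fun i ↦ hstepfin i
  obtain ⟨N, hN⟩ : ∃ N, d N = sInf (Set.range d) := Nat.sInf_mem (Set.range_nonempty d)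
  refine ⟨N, fun i hi ↦ le_antisymm (hanti hi) ?_⟩
  show d N ≤ d i
  rw [hN]
  exact Nat.sInf_le ⟨i, rfl⟩
end

section
/- Suppose a = (a₁, …, aₙ) ∈ Lⁿ and b = (b₁, …, b_m) ∈ L^m both σ-generate L over k, meaning that L is the union of the towers (L_i(a))_i and (L_i(b))_i determined by a and by b respectively. Then the eventual values of the non-increasing degree sequences ([L_i(a) : L_{i-1}(a)])_{i≥1} and ([L_i(b) : L_{i-1}(b)])_{i≥1} coincide; that is, the limit degree ld(L/k) does not depend on the choice of σ-generating tuple. -/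
open IntermediateField

section Aux

variable {k L : Type*} [Field k] [Field L] [Algebra k L] [Algebra.IsAlgebraic k L]
  (σ : L →+* L)

private lemma tower_mono {n : ℕ} (c : Fin n → L) (LC : ℕ → IntermediateField k L)
    (hLC : ∀ i, LC i =
      IntermediateField.adjoin k {x : L | ∃ p : Fin n, ∃ j ≤ i, x = (⇑σ)^[j] (c p)}) :
    Monotone LC := by
  intro i i' h
  rw [hLC i, hLC i']
  apply IntermediateField.adjoin.mono
  rintro x ⟨p, j, hj, rfl⟩
  exact ⟨p, j, hj.trans h, rfl⟩

private lemma tower_fd {n : ℕ} (c : Fin n → L) (LC : ℕ → IntermediateField k L)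
    (hLC : ∀ i, LC i =
      IntermediateField.adjoin k {x : L | ∃ p : Fin n, ∃ j ≤ i, x = (⇑σ)^[j] (c p)}) (i : ℕ) :
    FiniteDimensional k (LC i) := by
  rw [hLC i]
  have hfin : ({x : L | ∃ p : Fin n, ∃ j ≤ i, x = (⇑σ)^[j] (c p)}).Finite := by
    apply Set.Finite.subset
      (Set.finite_range fun pj : Fin n × Fin (i + 1) => (⇑σ)^[(pj.2 : ℕ)] (c pj.1))
    rintro x ⟨p, j, hj, rfl⟩
    exact ⟨⟨p, ⟨j, by omega⟩⟩, rfl⟩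
  haveI := hfin.to_subtype
  exact IntermediateField.finiteDimensional_adjoin
    (fun x _ => (Algebra.IsAlgebraic.isAlgebraic x).isIntegral)

private lemma tower_step
    (hstable : ∀ c : k, ∃ c' : k, σ (algebraMap k L c) = algebraMap k L c')
    {n : ℕ} (c : Fin n → L) (LC : ℕ → IntermediateField k L)
    (hLC : ∀ i, LC i =
      IntermediateField.adjoin k {x : L | ∃ p : Fin n, ∃ j ≤ i, x = (⇑σ)^[j] (c p)})
    (i : ℕ) : ∀ x ∈ LC i, σ x ∈ LC (i + 1) := by
  set T : IntermediateField k L :=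
    Subfield.toIntermediateField ((LC (i + 1)).toSubfield.comap σ) (by
      intro x
      obtain ⟨x', hx'⟩ := hstable x
      simp only [Subfield.mem_comap, hx']
      exact (LC (i + 1)).algebraMap_mem x') with hT
  have key : LC i ≤ T := by
    rw [hLC i, adjoin_le_iff]
    rintro x ⟨p, j, hj, rfl⟩
    show σ ((⇑σ)^[j] (c p)) ∈ LC (i + 1)
    rw [← Function.iterate_succ_apply' σ j (c p), hLC (i + 1)]
    exact subset_adjoin k _ ⟨p, j + 1, by omega, rfl⟩
  intro x hx
  exact key hx

private lemma tower_iterate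
    (hstable : ∀ c : k, ∃ c' : k, σ (algebraMap k L c) = algebraMap k L c')
    {n : ℕ} (c : Fin n → L) (LC : ℕ → IntermediateField k L)
    (hLC : ∀ i, LC i =
      IntermediateField.adjoin k {x : L | ∃ p : Fin n, ∃ j ≤ i, x = (⇑σ)^[j] (c p)})
    (j : ℕ) : ∀ i : ℕ, ∀ x ∈ LC i, (⇑σ)^[j] x ∈ LC (i + j) := by
  induction j with
  | zero => intro i x hx; simpa using hx
  | succ j ih =>
    intro i x hx
    rw [Function.iterate_succ_apply' σ j x]
    exact tower_step σ hstable c LC hLC (i + j) _ (ih i x hx)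

/-- If the `LC'` tower exhausts `L`, then the `LC` tower is eventually contained in shifts
of the `LC'` tower. -/
private lemma tower_le_tower
    (hstable : ∀ c : k, ∃ c' : k, σ (algebraMap k L c) = algebraMap k L c')
    {n m : ℕ} (c : Fin n → L) (c' : Fin m → L) (LC LC' : ℕ → IntermediateField k L)
    (hLC : ∀ i, LC i =
      IntermediateField.adjoin k {x : L | ∃ p : Fin n, ∃ j ≤ i, x = (⇑σ)^[j] (c p)})
    (hLC' : ∀ i, LC' i =
      IntermediateField.adjoin k {x : L | ∃ p : Fin m, ∃ j ≤ i, x = (⇑σ)^[j] (c' p)})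
    (hgen : ⨆ i : ℕ, LC' i = ⊤) :
    ∃ r : ℕ, ∀ i, LC i ≤ LC' (i + r) := by
  have mono' := tower_mono σ c' LC' hLC'
  have hmem : ∀ p : Fin n, ∃ r, c p ∈ LC' r := by
    intro p
    have : c p ∈ (⨆ i : ℕ, LC' i) := hgen ▸ IntermediateField.mem_top
    rwa [← SetLike.mem_coe, IntermediateField.coe_iSup_of_directed (mono'.directed_le),
      Set.mem_iUnion] at this
  choose r hr using hmem
  refine ⟨Finset.univ.sup r, fun i => ?_⟩
  rw [hLC i, adjoin_le_iff]
  rintro x ⟨p, j, hj, rfl⟩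
  have h1 : c p ∈ LC' (Finset.univ.sup r) :=
    mono' (Finset.le_sup (Finset.mem_univ p)) (hr p)
  have h2 := tower_iterate σ hstable c' LC' hLC' j _ _ h1
  exact mono' (by omega : Finset.univ.sup r + j ≤ i + Finset.univ.sup r) h2

private lemma tower_pow {n : ℕ} (c : Fin n → L) (LC : ℕ → IntermediateField k L)
    (hLC : ∀ i, LC i =
      IntermediateField.adjoin k {x : L | ∃ p : Fin n, ∃ j ≤ i, x = (⇑σ)^[j] (c p)})
    {d N : ℕ} (hd : ∀ i ≥ N, relfinrank (LC i) (LC (i + 1)) = d)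
    (i : ℕ) (hi : i ≥ N) (ℓ : ℕ) : relfinrank (LC i) (LC (i + ℓ)) = d ^ ℓ := by
  have mono := tower_mono σ c LC hLC
  induction ℓ with
  | zero => simpa using IntermediateField.relfinrank_self (LC i)
  | succ ℓ ih =>
    have := IntermediateField.relfinrank_mul_relfinrank
      (mono (by omega : i ≤ i + ℓ)) (mono (by omega : i + ℓ ≤ i + (ℓ + 1)))
    have hd' := hd (i + ℓ) (by omega)
    rw [show i + ℓ + 1 = i + (ℓ + 1) from by omega] at hd'
    rw [← this, ih, hd', pow_succ]

private lemma relfinrank_pos {A B : IntermediateField k L} (h : A ≤ B)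
    [FiniteDimensional k B] : 0 < relfinrank A B := by
  rw [IntermediateField.relfinrank_eq_finrank_of_le h]
  haveI : FiniteDimensional k (extendScalars h) := ‹FiniteDimensional k B›
  haveI := FiniteDimensional.right k A (extendScalars h)
  exact Module.finrank_pos

/-- Arithmetic helper: `(D+1)^ℓ * D ≥ D^ℓ * (D + ℓ)`. -/
private lemma pow_succ_ge (D : ℕ) : ∀ ℓ : ℕ, D ^ ℓ * (D + ℓ) ≤ (D + 1) ^ ℓ * D := by
  intro ℓ
  induction ℓ with
  | zero => simp
  | succ ℓ ih =>
    calc D ^ (ℓ + 1) * (D + (ℓ + 1)) = D * (D ^ ℓ * (D + ℓ)) + D ^ ℓ * D := by ring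
    _ ≤ D * ((D + 1) ^ ℓ * D) + (D + 1) ^ ℓ * D :=
        Nat.add_le_add (Nat.mul_le_mul le_rfl ih)
          (Nat.mul_le_mul (Nat.pow_le_pow_left (Nat.le_succ D) ℓ) le_rfl)
    _ = (D + 1) ^ (ℓ + 1) * D := by ring

/-- Arithmetic helper: if `d ^ ℓ ∣ D ^ (ℓ + t)` for all `ℓ` and `0 < D`, then `d ≤ D`. -/
private lemma le_of_pow_dvd_pow {d D t : ℕ} (hD : 0 < D)
    (h : ∀ ℓ : ℕ, d ^ ℓ ∣ D ^ (ℓ + t)) : d ≤ D := by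
  by_contra hc
  push_neg at hc
  have hle : ∀ ℓ : ℕ, d ^ ℓ ≤ D ^ ℓ * D ^ t := fun ℓ => by
    have := Nat.le_of_dvd (Nat.pow_pos hD) (h ℓ)
    rwa [pow_add] at this
  set ℓ := D ^ (t + 1)
  have h1 : (D + 1) ^ ℓ ≤ d ^ ℓ := Nat.pow_le_pow_left (by omega) ℓ
  have h2 := pow_succ_ge D ℓ
  have h3 : D ^ ℓ * (D + ℓ) ≤ D ^ ℓ * D ^ t * D := by
    calc D ^ ℓ * (D + ℓ) ≤ (D + 1) ^ ℓ * D := h2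
    _ ≤ d ^ ℓ * D := by gcongr
    _ ≤ D ^ ℓ * D ^ t * D := by gcongr; exact hle ℓ
  have h4 : D ^ ℓ * (D + D ^ (t + 1)) ≤ D ^ ℓ * D ^ (t + 1) := by
    rw [pow_succ] at *
    calc D ^ ℓ * (D + D ^ t * D) = D ^ ℓ * (D + ℓ) := by rw [show ℓ = D ^ t * D from pow_succ D t]
    _ ≤ D ^ ℓ * D ^ t * D := h3
    _ = D ^ ℓ * (D ^ t * D) := by ring
  have h5 : D + D ^ (t + 1) ≤ D ^ (t + 1) :=
    Nat.le_of_mul_le_mul_left (by linarith [h4]) (Nat.pow_pos hD : 0 < D ^ ℓ)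
  omega

end Aux

theorem limitDegree_independent_of_generators {k L : Type*} [Field k] [Field L]
    [Algebra k L] [Algebra.IsAlgebraic k L] (σ : L →+* L)
    (hstable : ∀ c : k, ∃ c' : k, σ (algebraMap k L c) = algebraMap k L c')
    {n m : ℕ} (a : Fin n → L) (b : Fin m → L)
    (LA LB : ℕ → IntermediateField k L)
    (hLA : ∀ i, LA i =
      IntermediateField.adjoin k {x : L | ∃ p : Fin n, ∃ j ≤ i, x = (⇑σ)^[j] (a p)})
    (hLB : ∀ i, LB i =
      IntermediateField.adjoin k {x : L | ∃ p : Fin m, ∃ j ≤ i, x = (⇑σ)^[j] (b p)})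
    (hgenA : ⨆ i : ℕ, LA i = ⊤) (hgenB : ⨆ i : ℕ, LB i = ⊤)
    (da db : ℕ)
    (hda : ∃ N : ℕ, ∀ i ≥ N, relfinrank (LA i) (LA (i + 1)) = da)
    (hdb : ∃ N : ℕ, ∀ i ≥ N, relfinrank (LB i) (LB (i + 1)) = db) :
    da = db := by
  obtain ⟨NA, hNA⟩ := hda
  obtain ⟨NB, hNB⟩ := hdb
  have monoA := tower_mono σ a LA hLA
  have monoB := tower_mono σ b LB hLB
  haveI fdA := tower_fd σ a LA hLA
  haveI fdB := tower_fd σ b LB hLB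
  obtain ⟨r, hr⟩ := tower_le_tower σ hstable a b LA LB hLA hLB hgenB
  obtain ⟨s, hs⟩ := tower_le_tower σ hstable b a LB LA hLB hLA hgenA
  -- positivity
  have hda_pos : 0 < da := by
    rw [← hNA NA le_rfl]
    haveI := fdA (NA + 1)
    exact relfinrank_pos (monoA (by omega : NA ≤ NA + 1))
  have hdb_pos : 0 < db := by
    rw [← hNB NB le_rfl]
    haveI := fdB (NB + 1)
    exact relfinrank_pos (monoB (by omega : NB ≤ NB + 1))
  set i := max NA NB with hi
  -- key divisibility in both directions
  have key : ∀ (LC LD : ℕ → IntermediateField k L), Monotone LC → Monotone LD →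
      (∀ j, FiniteDimensional k (LD j)) →
      ∀ (NC r s dloc dloc' i : ℕ), i ≥ NC →
      (∀ ℓ, relfinrank (LC i) (LC (i + ℓ)) = dloc ^ ℓ) →
      (∀ ℓ, relfinrank (LD (i + r)) (LD (i + r + ℓ)) = dloc' ^ ℓ) →
      (∀ j, LC j ≤ LD (j + r)) → (∀ j, LD j ≤ LC (j + s)) →
      ∀ ℓ, dloc' ^ ℓ ∣ dloc ^ (ℓ + (r + s)) := by
    intro LC LD monoC monoD fdD NC r s dloc dloc' i hiNC hpowC hpowD hCD hDC ℓ
    have c1 : LC i ≤ LD (i + r) := hCD i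
    have c2 : LD (i + r) ≤ LD (i + r + ℓ) := monoD (by omega)
    have c3 : LD (i + r + ℓ) ≤ LC (i + r + ℓ + s) := hDC (i + r + ℓ)
    have e1 : relfinrank (LC i) (LC (i + (ℓ + (r + s)))) = dloc ^ (ℓ + (r + s)) := hpowC _
    rw [show i + (ℓ + (r + s)) = i + r + ℓ + s from by omega] at e1
    have t1 := IntermediateField.relfinrank_mul_relfinrank c1 (c2.trans c3)
    have t2 := IntermediateField.relfinrank_mul_relfinrank c2 c3
    rw [← t2, ← mul_assoc] at t1
    refine ⟨relfinrank (LC i) (LD (i + r)) * relfinrank (LD (i + r + ℓ)) (LC (i + r + ℓ + s)),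
      ?_⟩
    rw [← e1, ← t1, hpowD ℓ]
    ring
  have hAB : db ≤ da := by
    exact le_of_pow_dvd_pow hda_pos <| key LA LB monoA monoB fdB NA r s da db i (le_max_left _ _)
      (tower_pow σ a LA hLA hNA i (le_max_left _ _))
      (tower_pow σ b LB hLB hNB (i + r) ((le_max_right _ _).trans (Nat.le_add_right i r)))
      hr hs
  have hBA : da ≤ db := by
    exact le_of_pow_dvd_pow hdb_pos <| key LB LA monoB monoA fdA NB s r db da i (le_max_right _ _)
      (tower_pow σ b LB hLB hNB i (le_max_right _ _))
      (tower_pow σ a LA hLA hNA (i + s) ((le_max_left _ _).trans (Nat.le_add_right i s)))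
      hs hr
  omega
end

section
/- Let E₀ be a finite type, E : E₀ → E₀ → Prop a decidable relation, and f : E₀ ≃ E₀ a bijection such that E a b implies E (f a) (f b) for all a, b. Let T be the E₀ × E₀ integer matrix with T a b = 1 if E a b and T a b = 0 otherwise, and let F be the permutation matrix of f, i.e., F a b = 1 if a = f(b) and F a b = 0 otherwise. Then for every n ≥ 1 the set {x : ℕ → E₀ | (∀ i, E (x i) (x (i+1))) ∧ (∀ i, x (i+1) = f^[n] (x i))} is finite, and its cardinality equals the trace of the matrix T * F^n (equivalently, the number of a ∈ E₀ with E a (f^[n] a)). -/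
/-!
Let `E₀` be a finite alphabet, `E` an edge relation, `X_E` the associated subshift of
finite type with shift `σ`, and `f` a bijection of `E₀` preserving `E`, inducing the
1-block map `φ`.  Then for `n ≥ 1` the equalizer `{x ∈ X_E : σ x = φ^n x}` is finite and
its cardinality equals the trace of `T * Fⁿ`, where `T` is the transition matrix of `E`
and `F` the permutation matrix of `f`; equivalently it is the number of `a ∈ E₀` with
`E a (f^[n] a)`.
-/

private lemma perm_pow_apply {E₀ : Type*} [Fintype E₀] [DecidableEq E₀] (f : E₀ ≃ E₀)
    (n : ℕ) :
    ((Matrix.of fun a b => if a = f b then (1 : ℤ) else 0) ^ n)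
      = Matrix.of fun a b => if a = (⇑f)^[n] b then (1 : ℤ) else 0 := by
  induction n with
  | zero =>
    ext a b
    simp [Matrix.one_apply, eq_comm]
    split_ifs <;> simp_all
  | succ k ih =>
    ext a b
    rw [pow_succ', Matrix.mul_apply]
    simp only [ih, Matrix.of_apply, ite_mul, one_mul, zero_mul]
    have step : ∀ x : E₀,
        (if a = f x then (if x = (⇑f)^[k] b then (1 : ℤ) else 0) else 0)
        = if x = (⇑f)^[k] b then (if a = f x then (1 : ℤ) else 0) else 0 := by
      intro x
      by_cases h : x = (⇑f)^[k] b
      · simp [h]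
      · simp only [if_neg h, ite_self]
    rw [Finset.sum_congr rfl fun x _ => step x,
      Finset.sum_ite_eq' Finset.univ ((⇑f)^[k] b) (fun x => if a = f x then (1 : ℤ) else 0)]
    simp [Function.iterate_succ_apply']

theorem sft_equalizer_card_eq_trace {E₀ : Type*} [Fintype E₀] [DecidableEq E₀]
    (E : E₀ → E₀ → Prop) [DecidableRel E] (f : E₀ ≃ E₀)
    (hf : ∀ a b, E a b → E (f a) (f b)) (n : ℕ) (hn : 1 ≤ n) :
    {x : ℕ → E₀ | (∀ i, E (x i) (x (i + 1))) ∧ ∀ i, x (i + 1) = (⇑f)^[n] (x i)}.Finite ∧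
    ({x : ℕ → E₀ | (∀ i, E (x i) (x (i + 1))) ∧ ∀ i, x (i + 1) = (⇑f)^[n] (x i)}.ncard : ℤ)
      = Matrix.trace
          ((Matrix.of fun a b => if E a b then (1 : ℤ) else 0) *
            (Matrix.of fun a b => if a = f b then (1 : ℤ) else 0) ^ n) ∧
    {x : ℕ → E₀ | (∀ i, E (x i) (x (i + 1))) ∧ ∀ i, x (i + 1) = (⇑f)^[n] (x i)}.ncard
      = {a : E₀ | E a ((⇑f)^[n] a)}.ncard := by
  set S : Set (ℕ → E₀) :=
    {x : ℕ → E₀ | (∀ i, E (x i) (x (i + 1))) ∧ ∀ i, x (i + 1) = (⇑f)^[n] (x i)} with hS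
  set A : Set E₀ := {a : E₀ | E a ((⇑f)^[n] a)} with hA
  -- hf iterated
  have hfk : ∀ (k : ℕ) (a b : E₀), E a b → E ((⇑f)^[k] a) ((⇑f)^[k] b) := by
    intro k
    induction k with
    | zero => intro a b h; simpa using h
    | succ m ih =>
      intro a b h
      simpa [Function.iterate_succ_apply'] using hf _ _ (ih a b h)
  -- the map a ↦ (i ↦ f^[n*i] a) is a bijection from A onto S
  set g : E₀ → (ℕ → E₀) := fun a i => (⇑f)^[n * i] a with hg
  have hg0 : ∀ a, g a 0 = a := by intro a; simp [hg]
  have hmem : ∀ a ∈ A, g a ∈ S := by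
    intro a ha
    constructor
    · intro i
      have : E ((⇑f)^[n * i] a) ((⇑f)^[n * i] ((⇑f)^[n] a)) := hfk _ _ _ ha
      have heq : (⇑f)^[n * i] ((⇑f)^[n] a) = (⇑f)^[n * (i + 1)] a := by
        rw [← Function.iterate_add_apply, Nat.mul_add, Nat.mul_one]
      rw [heq] at this
      exact this
    · intro i
      show (⇑f)^[n * (i + 1)] a = (⇑f)^[n] ((⇑f)^[n * i] a)
      rw [Nat.mul_add, Nat.mul_one, Nat.add_comm, Function.iterate_add_apply]
  have hval : ∀ x ∈ S, ∀ i, x i = (⇑f)^[n * i] (x 0) := by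
    intro x hx i
    induction i with
    | zero => simp
    | succ m ih =>
      rw [hx.2 m, ih, ← Function.iterate_add_apply, Nat.mul_add, Nat.mul_one,
        Nat.add_comm]
  have hbij : Set.BijOn g A S := by
    refine ⟨hmem, ?_, ?_⟩
    · intro a _ b _ hab
      have := congrFun hab 0
      simpa [hg0] using this
    · intro x hx
      refine ⟨x 0, ?_, ?_⟩
      · have h1 := hx.1 0
        rw [hx.2 0] at h1
        exact h1
      · funext i
        exact (hval x hx i).symm
  have hAfin : A.Finite := Set.toFinite A
  have hSfin : S.Finite := hbij.image_eq ▸ (hAfin.image g)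
  have hcard : S.ncard = A.ncard := by
    rw [← hbij.image_eq, Set.ncard_image_of_injOn hbij.injOn]
  refine ⟨hSfin, ?_, hcard⟩
  rw [hcard]
  -- compute the trace
  rw [perm_pow_apply, Matrix.trace]
  have htr : ∀ a : E₀,
      ((Matrix.of fun a b => if E a b then (1 : ℤ) else 0) *
        Matrix.of fun a b => if a = (⇑f)^[n] b then (1 : ℤ) else 0) a a
      = if E a ((⇑f)^[n] a) then (1 : ℤ) else 0 := by
    intro a
    rw [Matrix.mul_apply]
    have step : ∀ b : E₀,
        (Matrix.of fun a b => if E a b then (1 : ℤ) else 0) a b *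
          (Matrix.of fun a b => if a = (⇑f)^[n] b then (1 : ℤ) else 0) b a
        = if b = (⇑f)^[n] a then (if E a b then (1 : ℤ) else 0) else 0 := by
      intro b
      by_cases h : b = (⇑f)^[n] a <;> simp [h]
    rw [Finset.sum_congr rfl fun b _ => step b,
      Finset.sum_ite_eq' Finset.univ ((⇑f)^[n] a) (fun b => if E a b then (1 : ℤ) else 0)]
    simp
  simp only [Matrix.diag]
  rw [Finset.sum_congr rfl fun a _ => htr a, Finset.sum_boole]
  have : A.ncard = (Finset.filter (fun a => E a ((⇑f)^[n] a)) Finset.univ).card := by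
    rw [Set.ncard_eq_toFinset_card']
    congr 1
    ext a
    simp [hA]
  rw [this]
end

section
/- Let E₀ be a finite type, E : E₀ → E₀ → Prop a decidable relation, and f : E₀ ≃ E₀ a bijection such that E a b implies E (f a) (f b) for all a, b. For n ≥ 1 let N_n be the cardinality of the finite set {x : ℕ → E₀ | (∀ i, E (x i) (x (i+1))) ∧ (∀ i, x (i+1) = f^[n] (x i))}. Then the formal power series S(t) = Σ_{n≥0} N_{n+1} tⁿ over ℤ is rational; more precisely, there exist an integer m ≥ 1 and a polynomial p ∈ ℤ[t] such that (1 − t^m)·S(t) = p(t) in ℤ[[t]]. (This expresses that the difference zeta function Z(t) = exp(Σ_{n≥1} N_n tⁿ/n) is near-rational: its logarithmic derivative S is rational.) -/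
/-!
Near-rationality of the difference zeta function: with `N_n` the number of points `x` of
the subshift of finite type `X_E` satisfying `σ x = φ^n x` (where `φ` is the 1-block map
of a bijection `f` of the alphabet preserving the edge relation `E`), the generating
series `S(t) = Σ_{n ≥ 0} N_{n+1} tⁿ ∈ ℤ⟦t⟧` is rational: there are `m ≥ 1` and a
polynomial `p ∈ ℤ[t]` with `(1 - t^m) · S(t) = p(t)`.
-/

theorem diff_zeta_near_rational {E₀ : Type*} [Fintype E₀] [DecidableEq E₀]
    (E : E₀ → E₀ → Prop) [DecidableRel E] (f : E₀ ≃ E₀)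
    (hf : ∀ a b, E a b → E (f a) (f b)) (N : ℕ → ℕ)
    (hN : ∀ n, 1 ≤ n → N n =
      {x : ℕ → E₀ | (∀ i, E (x i) (x (i + 1))) ∧ ∀ i, x (i + 1) = (⇑f)^[n] (x i)}.ncard) :
    ∃ (m : ℕ) (p : Polynomial ℤ), 1 ≤ m ∧
      (1 - (PowerSeries.X : PowerSeries ℤ) ^ m) *
          PowerSeries.mk (fun n => (N (n + 1) : ℤ)) = (p : PowerSeries ℤ) := by
  classical
  set m := orderOf f with hm
  have hm1 : 1 ≤ m := orderOf_pos f
  have hfm : (⇑f)^[m] = id := by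
    funext a
    have h1 : f ^ m = 1 := pow_orderOf_eq_one f
    have h2 : (⇑f)^[m] a = (f ^ m) a := (Equiv.Perm.iterate_eq_pow f m ▸ rfl)
    rw [h2, h1]; rfl
  -- periodicity of N
  have hper : ∀ n, N (n + 1 + m) = N (n + 1) := by
    intro n
    rw [hN (n + 1 + m) (by omega), hN (n + 1) (by omega)]
    have : (⇑f)^[n + 1 + m] = (⇑f)^[n + 1] := by
      rw [Function.iterate_add, hfm]; simp
    rw [this]
  refine ⟨m, ∑ k ∈ Finset.range m, Polynomial.C ((N (k + 1) : ℤ)) * Polynomial.X ^ k,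
    hm1, ?_⟩
  ext k
  rw [sub_mul, one_mul, map_sub, PowerSeries.coeff_X_pow_mul']
  have hcp : (Polynomial.coeff (∑ j ∈ Finset.range m,
      Polynomial.C ((N (j + 1) : ℤ)) * Polynomial.X ^ j) k)
      = if k < m then (N (k + 1) : ℤ) else 0 := by
    rw [Polynomial.finset_sum_coeff]
    simp only [Polynomial.coeff_C_mul, Polynomial.coeff_X_pow, mul_ite, mul_one, mul_zero]
    rw [Finset.sum_ite_eq (Finset.range m) k]
    simp [Finset.mem_range]
  rw [Polynomial.coeff_coe, hcp]
  by_cases h : m ≤ k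
  · rw [if_pos h, if_neg (by omega)]
    simp only [PowerSeries.coeff_mk]
    have := hper (k - m)
    have hk : k - m + 1 + m = k + 1 := by omega
    rw [hk] at this
    rw [this]
    ring
  · rw [if_neg h, if_pos (by omega)]
    simp
end

section
/- Let E₀ be a finite type, E : E₀ → E₀ → Prop an edge relation, and X_E the associated subshift of finite type with shift σ. Equip X_E with the σ-topology, whose closed sets are exactly the subsets C ⊆ X_E that are closed in the subspace topology (inherited from the product topology on ℕ → E₀ with E₀ discrete) and satisfy σ(C) ⊆ C (equivalently, whose open sets are the open U with σ⁻¹(U) ⊆ U). Then X_E has only finitely many connected components with respect to the σ-topology. -/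
/-!
A subshift of finite type `X_E` over a finite alphabet `E₀`, equipped with the
`σ`-topology — whose open sets are the sets that are open in the subspace topology
(inherited from the product topology on `ℕ → E₀` with `E₀` discrete) and stable under
preimage by the shift `σ` (equivalently, whose closed sets are the closed `C` with
`σ(C) ⊆ C`) — has only finitely many connected components.
-/

/-- The subshift of finite type associated to the edge relation `E`. -/
def SFT (E₀ : Type*) (E : E₀ → E₀ → Prop) : Type _ :=
  {x : ℕ → E₀ // ∀ i, E (x i) (x (i + 1))}

/-- The shift map on a subshift of finite type. -/
def SFT.shift {E₀ : Type*} {E : E₀ → E₀ → Prop} (x : SFT E₀ E) : SFT E₀ E :=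
  ⟨fun i => x.1 (i + 1), fun i => x.2 (i + 1)⟩

/-- The subspace topology on `X_E ⊆ (ℕ → E₀)`, with `E₀` discrete. -/
def SFT.subspaceTopology (E₀ : Type*) (E : E₀ → E₀ → Prop) :
    TopologicalSpace (SFT E₀ E) :=
  TopologicalSpace.induced Subtype.val
    (@Pi.topologicalSpace ℕ (fun _ => E₀) (fun _ => ⊥))

/-- The `σ`-topology on `X_E`: a set is open iff it is open in the subspace topology and
its preimage under the shift is contained in it (equivalently, closed sets are the
subspace-closed sets `C` with `σ(C) ⊆ C`). -/
def SFT.sigmaTopology (E₀ : Type*) (E : E₀ → E₀ → Prop) :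
    TopologicalSpace (SFT E₀ E) where
  IsOpen U := (SFT.subspaceTopology E₀ E).IsOpen U ∧ SFT.shift ⁻¹' U ⊆ U
  isOpen_univ := ⟨(SFT.subspaceTopology E₀ E).isOpen_univ, fun _ _ => trivial⟩
  isOpen_inter := fun U V hU hV =>
    ⟨(SFT.subspaceTopology E₀ E).isOpen_inter U V hU.1 hV.1,
      fun x hx => ⟨hU.2 hx.1, hV.2 hx.2⟩⟩
  isOpen_sUnion := fun S hS =>
    ⟨(SFT.subspaceTopology E₀ E).isOpen_sUnion S (fun t ht => (hS t ht).1),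
      fun x hx => by
        obtain ⟨t, ht, hxt⟩ := hx
        exact ⟨t, ht, (hS t ht).2 hxt⟩⟩

namespace SFTAux

open Filter Topology

set_option linter.unusedSectionVars false

variable {E₀ : Type*} [Finite E₀] {E : E₀ → E₀ → Prop}

lemma sigma_isOpen_iff {U : Set (SFT E₀ E)} :
    @IsOpen _ (SFT.sigmaTopology E₀ E) U ↔
      @IsOpen _ (SFT.subspaceTopology E₀ E) U ∧ SFT.shift ⁻¹' U ⊆ U := Iff.rfl

lemma sigma_closed_shift {C : Set (SFT E₀ E)}
    (hC : @IsClosed _ (SFT.sigmaTopology E₀ E) C) {x : SFT E₀ E} (hx : x ∈ C) :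
    SFT.shift x ∈ C := by
  by_contra h
  exact ((sigma_isOpen_iff.mp hC.isOpen_compl).2 h) hx

lemma sigma_closed_subspace_closed {C : Set (SFT E₀ E)}
    (hC : @IsClosed _ (SFT.sigmaTopology E₀ E) C) :
    @IsClosed _ (SFT.subspaceTopology E₀ E) C := by
  letI := SFT.subspaceTopology E₀ E
  rw [← isOpen_compl_iff]
  exact (sigma_isOpen_iff.mp hC.isOpen_compl).1

lemma shiftn_coe (n : ℕ) (x : SFT E₀ E) (i : ℕ) :
    (SFT.shift^[n] x).1 i = x.1 (i + n) := by
  induction n generalizing x i with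
  | zero => rfl
  | succ n ih =>
    rw [Function.iterate_succ_apply]
    rw [ih]
    show x.1 (i + n + 1) = x.1 (i + (n + 1))
    ring_nf

/-- Shifts stay in the σ-connected component. -/
lemma shiftn_mem_component (n : ℕ) (x : SFT E₀ E) :
    SFT.shift^[n] x ∈ @connectedComponent _ (SFT.sigmaTopology E₀ E) x := by
  letI := SFT.sigmaTopology E₀ E
  induction n with
  | zero => exact mem_connectedComponent
  | succ n ih =>
    rw [Function.iterate_succ_apply']
    exact sigma_closed_shift isClosed_connectedComponent ih

/-- A σ-closed set is closed under coordinatewise limits of sequences. -/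
lemma mem_of_seq {S : Set (SFT E₀ E)} (hS : @IsClosed _ (SFT.sigmaTopology E₀ E) S)
    (u : ℕ → SFT E₀ E) (hu : ∀ k, u k ∈ S) (z : SFT E₀ E)
    (hlim : ∀ j, ∀ᶠ k in atTop, (u k).1 j = z.1 j) : z ∈ S := by
  letI tE : TopologicalSpace E₀ := ⊥
  haveI : DiscreteTopology E₀ := ⟨rfl⟩
  letI := SFT.subspaceTopology E₀ E
  have hS' : IsClosed S := sigma_closed_subspace_closed hS
  have htend : Tendsto u atTop (𝓝 z) := by
    have hn : (𝓝 z) = Filter.comap (Subtype.val : SFT E₀ E → ℕ → E₀) (𝓝 z.1) :=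
      nhds_induced Subtype.val z
    rw [hn]; refine Filter.tendsto_comap_iff.mpr (?_ : Tendsto (fun k => (u k).1) atTop (𝓝 z.1))
    have : (Subtype.val ∘ u : ℕ → ℕ → E₀) = fun k => (u k).1 := rfl
    rw [tendsto_pi_nhds]
    intro j
    rw [show (𝓝 (z.1 j)) = pure (z.1 j) from congrFun (nhds_discrete E₀) (z.1 j),
      tendsto_pure]
    exact hlim j
  exact hS'.mem_of_tendsto htend (Eventually.of_forall hu)

/-- Splicing the first `n` letters of `z` with `w`. -/
def splice (z w : SFT E₀ E) (n : ℕ) (hn : z.1 n = w.1 0) : SFT E₀ E :=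
  ⟨fun i => if i < n then z.1 i else w.1 (i - n), by
    intro i
    rcases lt_trichotomy (i + 1) n with h | h | h
    · have hi : i < n := by omega
      simp only [if_pos hi, if_pos h]
      exact z.2 i
    · have hi : i < n := by omega
      simp only [if_pos hi, if_neg (by omega : ¬ i + 1 < n)]
      have h0 : i + 1 - n = 0 := by omega
      rw [h0, ← hn, ← h]
      exact z.2 i
    · have hi : ¬ i < n := by omega
      simp only [if_neg hi, if_neg (by omega : ¬ i + 1 < n)]
      have h1 : i + 1 - n = (i - n) + 1 := by omega
      rw [h1]
      exact w.2 (i - n)⟩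

/-- Splice lemma: a point whose first letter recurs infinitely often lies in the
σ-connected component of every point with the same first letter. -/
lemma recurrent_mem_component (z w : SFT E₀ E) (h0 : z.1 0 = w.1 0)
    (hrec : ∀ N, ∃ n, N ≤ n ∧ z.1 n = z.1 0) :
    z ∈ @connectedComponent _ (SFT.sigmaTopology E₀ E) w := by
  letI := SFT.sigmaTopology E₀ E
  classical
  have splice_mem : ∀ (n : ℕ) (hn : z.1 n = w.1 0),
      splice z w n hn ∈ connectedComponent w := by
    intro n hn
    have hsh : SFT.shift^[n] (splice z w n hn) = w := by
      apply Subtype.ext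
      funext i
      rw [shiftn_coe]
      show (if i + n < n then z.1 (i + n) else w.1 (i + n - n)) = w.1 i
      rw [if_neg (by omega), Nat.add_sub_cancel]
    have hmem := shiftn_mem_component n (splice z w n hn)
    rw [hsh] at hmem
    rw [← connectedComponent_eq hmem]
    exact mem_connectedComponent
  have hrec' : ∀ N, ∃ n, N ≤ n ∧ z.1 n = w.1 0 := by
    intro N
    obtain ⟨n, hn, he⟩ := hrec N
    exact ⟨n, hn, he.trans h0⟩
  choose nk hnk hek using hrec'
  apply mem_of_seq isClosed_connectedComponent (fun k => splice z w (nk k) (hek k))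
    (fun k => splice_mem _ _) z
  intro j
  rw [eventually_atTop]
  refine ⟨j + 1, fun k hk => ?_⟩
  show (if j < nk k then z.1 j else w.1 (j - nk k)) = z.1 j
  rw [if_pos (by have := hnk k; omega)]

/-- The subspace topology is compact. -/
lemma compact_subspace : @CompactSpace (SFT E₀ E) (SFT.subspaceTopology E₀ E) := by
  letI tE : TopologicalSpace E₀ := ⊥
  haveI : DiscreteTopology E₀ := ⟨rfl⟩
  have hcl : IsClosed {x : ℕ → E₀ | ∀ i, E (x i) (x (i + 1))} := by
    have he : {x : ℕ → E₀ | ∀ i, E (x i) (x (i + 1))} =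
        ⋂ i, (fun x : ℕ → E₀ => (x i, x (i + 1))) ⁻¹' {p | E p.1 p.2} := by
      ext x; simp
    rw [he]
    exact isClosed_iInter fun i =>
      (isClosed_discrete _).preimage ((continuous_apply i).prodMk (continuous_apply (i + 1)))
  have hc : IsCompact {x : ℕ → E₀ | ∀ i, E (x i) (x (i + 1))} := hcl.isCompact
  rw [isCompact_iff_compactSpace] at hc
  exact hc

/-- Cluster point of the orbit: there is a point in the σ-component of `x`
all of whose letters occur arbitrarily late in `x`. -/
lemma exists_clusterTail (x : SFT E₀ E) :
    ∃ z : SFT E₀ E, z ∈ @connectedComponent _ (SFT.sigmaTopology E₀ E) x ∧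
      ∀ j N, ∃ n, N ≤ n ∧ z.1 j = x.1 (j + n) := by
  letI tE : TopologicalSpace E₀ := ⊥
  haveI : DiscreteTopology E₀ := ⟨rfl⟩
  letI := SFT.subspaceTopology E₀ E
  haveI : CompactSpace (SFT E₀ E) := compact_subspace
  obtain ⟨z, hz⟩ := exists_clusterPt_of_compactSpace
    (Filter.map (fun n => SFT.shift^[n] x) atTop)
  have hz' : MapClusterPt z atTop (fun n => SFT.shift^[n] x) := hz
  refine ⟨z, ?_, ?_⟩
  · have hcl : @IsClosed _ (SFT.sigmaTopology E₀ E)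
        (@connectedComponent _ (SFT.sigmaTopology E₀ E) x) :=
      @isClosed_connectedComponent _ (SFT.sigmaTopology E₀ E) x
    have hsub : IsClosed (@connectedComponent _ (SFT.sigmaTopology E₀ E) x) :=
      sigma_closed_subspace_closed hcl
    have hle : Filter.map (fun n => SFT.shift^[n] x) atTop ≤
        Filter.principal (@connectedComponent _ (SFT.sigmaTopology E₀ E) x) := by
      rw [Filter.le_principal_iff, Filter.mem_map]
      exact Filter.Eventually.of_forall fun n => shiftn_mem_component n x
    have hcp : ClusterPt z (Filter.principal
        (@connectedComponent _ (SFT.sigmaTopology E₀ E) x)) := hz.mono hle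
    rw [← mem_closure_iff_clusterPt] at hcp
    rwa [hsub.closure_eq] at hcp
  · intro j N
    have hopen : IsOpen {y : SFT E₀ E | y.1 j = z.1 j} := by
      have he : {y : SFT E₀ E | y.1 j = z.1 j} =
          (Subtype.val) ⁻¹' ((fun f : ℕ → E₀ => f j) ⁻¹' {z.1 j}) := rfl
      rw [he]
      exact (((isOpen_discrete _).preimage (continuous_apply j)).preimage
        continuous_subtype_val)
    have hnb : {y : SFT E₀ E | y.1 j = z.1 j} ∈ 𝓝 z := hopen.mem_nhds rfl
    have hfr := (mapClusterPt_iff_frequently.mp hz') _ hnb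
    rw [Filter.frequently_atTop] at hfr
    obtain ⟨n, hn, he⟩ := hfr N
    refine ⟨n, hn, ?_⟩
    rw [← he]
    exact shiftn_coe n x j
  
/-- Every point is σ-connected to a point whose first letter recurs infinitely often. -/
lemma exists_recurrent (x : SFT E₀ E) :
    ∃ z : SFT E₀ E, z ∈ @connectedComponent _ (SFT.sigmaTopology E₀ E) x ∧
      ∀ N, ∃ n, N ≤ n ∧ z.1 n = z.1 0 := by
  letI := SFT.sigmaTopology E₀ E
  classical
  suffices h : ∀ (k : ℕ) (x : SFT E₀ E), (Set.range x.1).ncard ≤ k →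
      ∃ z : SFT E₀ E, z ∈ connectedComponent x ∧ ∀ N, ∃ n, N ≤ n ∧ z.1 n = z.1 0 by
    exact h (Set.range x.1).ncard x le_rfl
  intro k
  induction k with
  | zero =>
    intro x hx
    exfalso
    have h0 : (Set.range x.1).ncard = 0 := Nat.le_zero.mp hx
    rw [Set.ncard_eq_zero (Set.toFinite _)] at h0
    exact absurd h0 (Set.nonempty_iff_ne_empty.mp ⟨x.1 0, Set.mem_range_self 0⟩)
  | succ k ih =>
    intro x hx
    by_cases hrec : ∀ N, ∃ n, N ≤ n ∧ x.1 n = x.1 0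
    · exact ⟨x, mem_connectedComponent, hrec⟩
    · push_neg at hrec
      obtain ⟨N, hN⟩ := hrec
      obtain ⟨z, hzc, hztail⟩ := exists_clusterTail x
      have hsub : Set.range z.1 ⊆ Set.range x.1 \ {x.1 0} := by
        rintro v ⟨j, rfl⟩
        obtain ⟨n, hn, he⟩ := hztail j N
        refine ⟨⟨j + n, he.symm⟩, ?_⟩
        simp only [Set.mem_singleton_iff]
        rw [he]
        exact hN (j + n) (by omega)
      have hlt : (Set.range z.1).ncard ≤ k := by
        have h1 : (Set.range z.1).ncard ≤ (Set.range x.1 \ {x.1 0}).ncard :=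
          Set.ncard_le_ncard hsub ((Set.toFinite _).diff)
        have h2 : (Set.range x.1 \ {x.1 0}).ncard < (Set.range x.1).ncard :=
          Set.ncard_diff_singleton_lt_of_mem (Set.mem_range_self 0) (Set.toFinite _)
        omega
      obtain ⟨z₂, hz₂c, hz₂rec⟩ := ih z hlt
      refine ⟨z₂, ?_, hz₂rec⟩
      rwa [← connectedComponent_eq hzc] at hz₂c

end SFTAux

theorem sft_sigmaTopology_finite_connectedComponents
    (E₀ : Type*) [Finite E₀] (E : E₀ → E₀ → Prop) :
    Finite (@ConnectedComponents (SFT E₀ E) (SFT.sigmaTopology E₀ E)) := by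
  classical
  letI := SFT.sigmaTopology E₀ E
  cases isEmpty_or_nonempty (SFT E₀ E) with
  | inl h =>
    haveI : Finite (SFT E₀ E) := Finite.of_subsingleton
    exact Finite.of_surjective _ ConnectedComponents.surjective_coe
  | inr h =>
    set g : E₀ → ConnectedComponents (SFT E₀ E) := fun v =>
      if hv : ∃ z : SFT E₀ E, (∀ N, ∃ n, N ≤ n ∧ z.1 n = z.1 0) ∧ z.1 0 = v then
        ConnectedComponents.mk hv.choose
      else ConnectedComponents.mk (Classical.arbitrary _) with hg
    have hsurj : Function.Surjective g := by
      intro c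
      obtain ⟨x, rfl⟩ := ConnectedComponents.surjective_coe c
      obtain ⟨z, hzc, hzrec⟩ := SFTAux.exists_recurrent x
      refine ⟨z.1 0, ?_⟩
      have hv : ∃ z' : SFT E₀ E, (∀ N, ∃ n, N ≤ n ∧ z'.1 n = z'.1 0) ∧ z'.1 0 = z.1 0 :=
        ⟨z, hzrec, rfl⟩
      rw [hg]
      simp only [dif_pos hv]
      obtain ⟨h₂rec, h₂0⟩ := hv.choose_spec
      rw [ConnectedComponents.coe_eq_coe]
      have h1 : hv.choose ∈ connectedComponent z :=
        SFTAux.recurrent_mem_component _ z h₂0 h₂rec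
      rw [(connectedComponent_eq h1).symm, (connectedComponent_eq hzc).symm]
    exact Finite.of_surjective g hsurj
end

section
/- Let (k, σ_k) ⊆ (L, σ_L) be difference fields (k a σ_L-stable subfield of L with σ_k the restriction of σ_L), with L algebraic over k, and suppose a = (a₁, …, aₙ) ∈ Lⁿ σ-generates L over k, i.e., L is generated as a k-algebra by {σ_L^i(a_m) : i ∈ ℕ, 1 ≤ m ≤ n}. Let ε : k{x₁, …, xₙ} → L be the morphism of difference k-algebras determined by ε(x_{m,i}) = σ_L^i(a_m), and let 𝔭 = ker ε. Then 𝔭 is a finitely generated difference ideal: there exists a finite subset B ⊆ 𝔭 such that 𝔭 equals the ideal generated by ⋃_{i∈ℕ} σ^i(B). (Hence every finitely σ-generated algebraic difference field extension is finitely σ-presented.) -/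
/-!
Every finitely `σ`-generated algebraic difference field extension is finitely
`σ`-presented: if `(L, σ_L)` is a difference field extension of `(k, σ_k)` with `L/k`
algebraic and `L` is `σ`-generated over `k` by a tuple `a ∈ Lⁿ`, then the kernel `𝔭` of
the evaluation morphism `ε : k{x₁, …, xₙ} → L`, `x_{m,i} ↦ σ_L^i (a_m)`, from the
difference polynomial ring is a finitely generated difference ideal: there is a finite set
`B ⊆ 𝔭` with `𝔭` equal to the ideal generated by `⋃ i, σ^i (B)`.
-/

/-- The distinguished endomorphism of the difference polynomial ring
`k{x₁, …, xₙ} = MvPolynomial (Fin n × ℕ) k`: it acts as `σk` on coefficients and sends the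
variable `x_{m,i}` to `x_{m,i+1}`. -/
noncomputable def diffPolyShift (k : Type*) [CommRing k] (σk : k →+* k) (n : ℕ) :
    MvPolynomial (Fin n × ℕ) k →+* MvPolynomial (Fin n × ℕ) k :=
  MvPolynomial.eval₂Hom ((MvPolynomial.C : k →+* MvPolynomial (Fin n × ℕ) k).comp σk)
    (fun p => MvPolynomial.X (p.1, p.2 + 1))

/-- The evaluation morphism `ε : k{x₁, …, xₙ} → L` of difference `k`-algebras determined
by `ε (x_{m,i}) = σ_L^i (a_m)`. -/
noncomputable def diffEval {k L : Type*} [CommRing k] [CommRing L] [Algebra k L]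
    (σL : L →+* L) {n : ℕ} (a : Fin n → L) :
    MvPolynomial (Fin n × ℕ) k →ₐ[k] L :=
  MvPolynomial.aeval (fun p : Fin n × ℕ => (⇑σL)^[p.2] (a p.1))

namespace DFEP

open MvPolynomial Submodule

/-- truncated σ-generated subalgebra of `L` -/
def KK (k : Type*) {L : Type*} [Field k] [Field L] [Algebra k L]
    (σL : L →+* L) {n : ℕ} (a : Fin n → L) (M : ℕ) : Subalgebra k L :=
  Algebra.adjoin k ((fun p : Fin n × ℕ => (⇑σL)^[p.2] (a p.1)) '' {p : Fin n × ℕ | p.2 ≤ M})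

/-- truncated polynomial subalgebra -/
noncomputable def RR (k : Type*) [Field k] (n M : ℕ) : Subalgebra k (MvPolynomial (Fin n × ℕ) k) :=
  Algebra.adjoin k (MvPolynomial.X '' {p : Fin n × ℕ | p.2 ≤ M})

/-- `KK (M+1)` as a module over `KK M` -/
def VV (k : Type*) {L : Type*} [Field k] [Field L] [Algebra k L]
    (σL : L →+* L) {n : ℕ} (a : Fin n → L) (M : ℕ) : Submodule ↥(KK k σL a M) L :=
  Submodule.span ↥(KK k σL a M) ↑(KK k σL a (M+1))

/-- relative degree sequence -/
noncomputable def ee (k : Type*) {L : Type*} [Field k] [Field L] [Algebra k L]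
    (σL : L →+* L) {n : ℕ} (a : Fin n → L) (M : ℕ) : ℕ :=
  Module.finrank ↥(KK k σL a M) ↥(VV k σL a M)

section basic

variable {k L : Type*} [Field k] [Field L] [Algebra k L]
  (σk : k →+* k) (σL : L →+* L) {n : ℕ} (a : Fin n → L)

lemma shift_C (c : k) : diffPolyShift k σk n (MvPolynomial.C c) = MvPolynomial.C (σk c) := by
  simp [diffPolyShift]

lemma shift_X (p : Fin n × ℕ) :
    diffPolyShift k σk n (MvPolynomial.X p) = MvPolynomial.X (p.1, p.2 + 1) := by
  simp [diffPolyShift]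

lemma eval_X (p : Fin n × ℕ) :
    diffEval σL a (k := k) (MvPolynomial.X p) = (⇑σL)^[p.2] (a p.1) := by
  simp [diffEval]

lemma eval_C (c : k) : diffEval σL a (k := k) (MvPolynomial.C c) = algebraMap k L c := by
  simp [diffEval]

variable (hcompat : ∀ c : k, σL (algebraMap k L c) = algebraMap k L (σk c))

include hcompat in
lemma eval_shift (f : MvPolynomial (Fin n × ℕ) k) :
    diffEval σL a (k := k) (diffPolyShift k σk n f) = σL (diffEval σL a (k := k) f) := by
  have h : ((diffEval σL a (k := k)) : MvPolynomial (Fin n × ℕ) k →+* L).comp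
      (diffPolyShift k σk n) = σL.comp ((diffEval σL a (k := k)) : MvPolynomial (Fin n × ℕ) k →+* L) := by
    apply MvPolynomial.ringHom_ext
    · intro c
      simp only [RingHom.comp_apply, RingHom.coe_coe, shift_C, eval_C]
      exact (hcompat c).symm
    · intro p
      simp [shift_X, eval_X, Function.iterate_succ_apply']
  exact RingHom.congr_fun h f

include hcompat in
lemma ker_shift {f : MvPolynomial (Fin n × ℕ) k}
    (hf : f ∈ RingHom.ker (diffEval σL a (k := k))) :
    diffPolyShift k σk n f ∈ RingHom.ker (diffEval σL a (k := k)) := by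
  rw [RingHom.mem_ker] at hf ⊢
  rw [eval_shift σk σL a hcompat, hf, map_zero]

lemma KK_mono {M M' : ℕ} (h : M ≤ M') : KK k σL a M ≤ KK k σL a M' :=
  Algebra.adjoin_mono (Set.image_mono fun p hp => le_trans hp h)

lemma RR_mono {M M' : ℕ} (h : M ≤ M') : RR k n M ≤ RR k n M' :=
  Algebra.adjoin_mono (Set.image_mono fun p hp => le_trans hp h)

include hcompat in
lemma mem_KK_sigma {M : ℕ} {x : L} (hx : x ∈ KK k σL a M) : σL x ∈ KK k σL a (M + 1) := by
  induction hx using Algebra.adjoin_induction with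
  | mem y hy =>
    obtain ⟨p, hp, rfl⟩ := hy
    apply Algebra.subset_adjoin
    refine ⟨(p.1, p.2 + 1), Nat.succ_le_succ hp, ?_⟩
    simp [Function.iterate_succ_apply']
  | algebraMap c => rw [hcompat]; exact Subalgebra.algebraMap_mem _ _
  | add x y _ _ hx hy => rw [map_add]; exact add_mem hx hy
  | mul x y _ _ hx hy => rw [map_mul]; exact mul_mem hx hy

lemma mem_RR_shift {M : ℕ} {f : MvPolynomial (Fin n × ℕ) k} (hf : f ∈ RR k n M) :
    diffPolyShift k σk n f ∈ RR k n (M + 1) := by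
  induction hf using Algebra.adjoin_induction with
  | mem y hy =>
    obtain ⟨p, hp, rfl⟩ := hy
    rw [shift_X]
    exact Algebra.subset_adjoin ⟨(p.1, p.2 + 1), Nat.succ_le_succ hp, rfl⟩
  | algebraMap c =>
    have : (algebraMap k (MvPolynomial (Fin n × ℕ) k)) c = MvPolynomial.C c := rfl
    rw [this, shift_C]
    exact Subalgebra.algebraMap_mem _ _
  | add x y _ _ hx hy => rw [map_add]; exact add_mem hx hy
  | mul x y _ _ hx hy => rw [map_mul]; exact mul_mem hx hy

lemma map_RR (M : ℕ) : (RR k n M).map (diffEval σL a (k := k)) = KK k σL a M := by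
  rw [RR, KK, AlgHom.map_adjoin]
  congr 1
  rw [Set.image_image]
  exact Set.image_congr fun p _ => eval_X σL a p

lemma eval_mem {M : ℕ} {f : MvPolynomial (Fin n × ℕ) k} (hf : f ∈ RR k n M) :
    diffEval σL a (k := k) f ∈ KK k σL a M := by
  rw [← map_RR σL a M]
  exact ⟨f, hf, rfl⟩

lemma eval_surj {M : ℕ} {y : L} (hy : y ∈ KK k σL a M) :
    ∃ f ∈ RR k n M, diffEval σL a (k := k) f = y := by
  rw [← map_RR σL a M] at hy
  obtain ⟨f, hf, rfl⟩ := hy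
  exact ⟨f, hf, rfl⟩

end basic


section dim

variable {k L : Type*} [Field k] [Field L] [Algebra k L]
  (σk : k →+* k) (σL : L →+* L) {n : ℕ} (a : Fin n → L)

/-- field structure on the truncated subalgebras -/
@[reducible]
noncomputable def fieldKK [Algebra.IsAlgebraic k L] (M : ℕ) : Field ↥(KK k σL a M) :=
  (Subalgebra.isField_of_algebraic (KK k σL a M)).toField

lemma coe_VV (M : ℕ) : (VV k σL a M : Set L) = ↑(KK k σL a (M + 1)) := by
  apply le_antisymm
  · intro x hx
    induction hx using Submodule.span_induction with
    | mem y hy => exact hy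
    | zero => exact zero_mem _
    | add x y _ _ hx hy => exact add_mem hx hy
    | smul c x _ hx =>
      have : c • x = (c : L) * x := rfl
      rw [this]
      exact mul_mem (KK_mono σL a (Nat.le_succ M) c.2) hx
  · exact Submodule.subset_span

lemma mem_VV {M : ℕ} {x : L} : x ∈ VV k σL a M ↔ x ∈ KK k σL a (M + 1) := by
  constructor
  · intro h
    have h2 : x ∈ (VV k σL a M : Set L) := h
    rw [coe_VV] at h2
    exact h2
  · intro h
    exact Submodule.subset_span h

lemma gen_finite (M : ℕ) : {p : Fin n × ℕ | p.2 ≤ M}.Finite :=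
  Set.Finite.subset (Set.Finite.prod Set.finite_univ (Set.finite_Iic M))
    (fun p hp => ⟨Set.mem_univ _, hp⟩)

lemma finite_VV [Algebra.IsAlgebraic k L] (M : ℕ) :
    Module.Finite ↥(KK k σL a M) ↥(VV k σL a M) := by
  have hfg : (Subalgebra.toSubmodule (KK k σL a (M+1))).FG := by
    apply fg_adjoin_of_finite (Set.Finite.image _ (gen_finite (n := n) M.succ))
    rintro x ⟨p, hp, rfl⟩
    exact (Algebra.IsAlgebraic.isAlgebraic _).isIntegral
  obtain ⟨T, hT⟩ := hfg
  have hTsub : (T : Set L) ⊆ ↑(KK k σL a (M+1)) := by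
    intro x hx
    have : x ∈ Submodule.span k (T : Set L) := Submodule.subset_span hx
    rw [hT] at this
    exact this
  have hVT : VV k σL a M = Submodule.span ↥(KK k σL a M) (T : Set L) := by
    apply le_antisymm
    · rw [VV]
      apply Submodule.span_le.2
      intro x hx
      have hx' : x ∈ Submodule.span k (T : Set L) := by rw [hT]; exact hx
      exact Submodule.span_le_restrictScalars k ↥(KK k σL a M) (T : Set L) hx'
    · apply Submodule.span_le.2
      intro x hx
      exact Submodule.subset_span (hTsub hx)
  rw [hVT]
  exact Module.Finite.span_of_finite _ T.finite_toSet

variable (hcompat : ∀ c : k, σL (algebraMap k L c) = algebraMap k L (σk c))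

include hcompat in
/-- `K_{M+1}` is contained in the `K_M`-span of `σ(K_M)`. -/
lemma span_sigma_image (M : ℕ) :
    (KK k σL a (M + 1) : Set L) ⊆
      ↑(Submodule.span ↥(KK k σL a M) (⇑σL '' ↑(KK k σL a M))) := by
  set T := Submodule.span ↥(KK k σL a M) (⇑σL '' ↑(KK k σL a M)) with hTdef
  have hone : (1 : L) ∈ T := by
    apply Submodule.subset_span
    exact ⟨1, one_mem _, map_one σL⟩
  have hsmul : ∀ y : L, y ∈ KK k σL a M → ∀ z ∈ T, y * z ∈ T := by
    intro y hy z hz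
    have : y * z = (⟨y, hy⟩ : ↥(KK k σL a M)) • z := rfl
    rw [this]
    exact Submodule.smul_mem _ _ hz
  have hmul : ∀ x ∈ T, ∀ z ∈ T, x * z ∈ T := by
    intro x hx z hz
    have := Submodule.mul_mem_mul hx hz
    rw [Submodule.span_mul_span] at this
    refine Submodule.span_le.2 ?_ this
    rintro w ⟨w1, ⟨u, hu, rfl⟩, w2, ⟨v, hv, rfl⟩, rfl⟩
    exact Submodule.subset_span ⟨u * v, mul_mem hu hv, map_mul σL u v⟩
  intro x hx
  induction hx using Algebra.adjoin_induction with
  | mem y hy =>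
    obtain ⟨⟨m, i⟩, hp, rfl⟩ := hy
    simp only [Set.mem_setOf_eq] at hp
    rcases i with _ | i
    · have hmem : a m ∈ KK k σL a M :=
        Algebra.subset_adjoin ⟨(m, 0), Nat.zero_le M, rfl⟩
      simpa using hsmul _ hmem 1 hone
    · show (⇑σL)^[i + 1] (a m) ∈ T
      rw [Function.iterate_succ_apply']
      apply Submodule.subset_span
      exact ⟨(⇑σL)^[i] (a m), Algebra.subset_adjoin ⟨(m, i), Nat.succ_le_succ_iff.mp hp, rfl⟩, rfl⟩
  | algebraMap c =>
    have hmem : algebraMap k L c ∈ KK k σL a M := Subalgebra.algebraMap_mem _ _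
    simpa using hsmul _ hmem 1 hone
  | add x y _ _ hx hy => exact add_mem hx hy
  | mul x y _ _ hx hy => exact hmul _ hx _ hy

include hcompat in
/-- σ of a spanning family spans the σ-image. -/
lemma sigma_span_step (M r : ℕ) (c : Fin r → L)
    (hc : ∀ x ∈ KK k σL a (M + 1), x ∈ Submodule.span ↥(KK k σL a M) (Set.range c)) :
    ∀ x ∈ KK k σL a (M + 1),
      σL x ∈ Submodule.span ↥(KK k σL a (M + 1)) (Set.range (⇑σL ∘ c)) := by
  intro x hx
  obtain ⟨w, hw⟩ := (mem_span_range_iff_exists_fun (R := ↥(KK k σL a M))).1 (hc x hx)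
  have hσ : σL x = ∑ t : Fin r, σL ((w t : L)) * σL (c t) := by
    rw [← hw, map_sum]
    exact Finset.sum_congr rfl fun t _ => by
      rw [show (w t) • (c t) = ((w t : L)) * c t from rfl, map_mul]
  rw [hσ]
  apply Submodule.sum_mem
  intro t _
  have hmem : σL ((w t : L)) ∈ KK k σL a (M + 1) := mem_KK_sigma σk σL a hcompat (w t).2
  have : σL ((w t : L)) * σL (c t)
      = (⟨σL ((w t : L)), hmem⟩ : ↥(KK k σL a (M + 1))) • (⇑σL ∘ c) t := rfl
  rw [this]
  exact Submodule.smul_mem _ _ (Submodule.subset_span (Set.mem_range_self t))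

lemma exists_spanning [Algebra.IsAlgebraic k L] (M : ℕ) :
    ∃ c : Fin (ee k σL a M) → L, (∀ t, c t ∈ KK k σL a (M + 1)) ∧
      ∀ x ∈ KK k σL a (M + 1), x ∈ Submodule.span ↥(KK k σL a M) (Set.range c) := by
  letI := fieldKK σL a (k := k) M
  letI := finite_VV σL a (k := k) M
  letI : Module.Free ↥(KK k σL a M) ↥(VV k σL a M) := Module.Free.of_divisionRing _ _
  let b := Module.finBasis ↥(KK k σL a M) ↥(VV k σL a M)
  refine ⟨fun t => ↑(b t), fun t => (mem_VV σL a).1 (b t).2, ?_⟩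
  intro x hx
  have hxV : x ∈ VV k σL a M := (mem_VV σL a).2 hx
  have h1 : (⟨x, hxV⟩ : ↥(VV k σL a M)) ∈
      Submodule.span ↥(KK k σL a M) (Set.range b) := by
    rw [b.span_eq]; trivial
  have h2 := Submodule.mem_map_of_mem (f := (VV k σL a M).subtype) h1
  rw [Submodule.map_span] at h2
  rw [← Set.range_comp] at h2
  exact h2

end dim

section rank

variable {k L : Type*} [Field k] [Field L] [Algebra k L] [Algebra.IsAlgebraic k L]
  (σk : k →+* k) (σL : L →+* L) {n : ℕ} (a : Fin n → L)
  (hcompat : ∀ c : k, σL (algebraMap k L c) = algebraMap k L (σk c))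

include hcompat in
/-- if `c` spans `K_{M+1}` over `K_M` then `σ ∘ c` spans `K_{M+2}` over `K_{M+1}`. -/
lemma span_shift (M r : ℕ) (c : Fin r → L)
    (hc : ∀ x ∈ KK k σL a (M + 1), x ∈ Submodule.span ↥(KK k σL a M) (Set.range c)) :
    VV k σL a (M + 1) ≤ Submodule.span ↥(KK k σL a (M + 1)) (Set.range (⇑σL ∘ c)) := by
  rw [VV]
  apply Submodule.span_le.2
  intro x hx
  have h1 : x ∈ ↑(Submodule.span ↥(KK k σL a (M + 1)) (⇑σL '' ↑(KK k σL a (M + 1)))) :=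
    span_sigma_image σk σL a hcompat (M + 1) hx
  have h2 : Submodule.span ↥(KK k σL a (M + 1)) (⇑σL '' ↑(KK k σL a (M + 1)))
      ≤ Submodule.span ↥(KK k σL a (M + 1)) (Set.range (⇑σL ∘ c)) := by
    apply Submodule.span_le.2
    rintro y ⟨u, hu, rfl⟩
    exact sigma_span_step σk σL a hcompat M r c hc u hu
  exact h2 h1

set_option maxHeartbeats 1000000 in
set_option synthInstance.maxHeartbeats 400000 in
include hcompat in
lemma ee_antitone (M : ℕ) : ee k σL a (M + 1) ≤ ee k σL a M := by
  obtain ⟨c, hcK, hc⟩ := exists_spanning σL a (k := k) M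
  letI := fieldKK σL a (k := k) (M + 1)
  have hle := span_shift σk σL a hcompat M _ c hc
  haveI : Module.Finite ↥(KK k σL a (M + 1))
      ↥(Submodule.span ↥(KK k σL a (M + 1)) (Set.range (⇑σL ∘ c))) :=
    Module.Finite.span_of_finite _ (Set.finite_range _)
  calc ee k σL a (M + 1)
      ≤ Module.finrank ↥(KK k σL a (M + 1))
          ↥(Submodule.span ↥(KK k σL a (M + 1)) (Set.range (⇑σL ∘ c))) :=
        Submodule.finrank_mono hle
    _ ≤ Fintype.card (Fin (ee k σL a M)) := finrank_range_le_card _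
    _ = ee k σL a M := Fintype.card_fin _

include hcompat in
lemma ee_stab : ∃ N : ℕ, ∀ M, N ≤ M → ee k σL a M = ee k σL a N := by
  have hanti : ∀ M M' : ℕ, M ≤ M' → ee k σL a M' ≤ ee k σL a M := by
    intro M M' h
    induction h with
    | refl => exact le_refl _
    | step h ih => exact le_trans (ee_antitone σk σL a hcompat _) ih
  obtain ⟨N, hN⟩ : ∃ N : ℕ, ee k σL a N = sInf (Set.range (ee k σL a)) := by
    have : sInf (Set.range (ee k σL a)) ∈ Set.range (ee k σL a) :=
      Nat.sInf_mem ⟨ee k σL a 0, 0, rfl⟩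
    obtain ⟨N, hN⟩ := this
    exact ⟨N, hN⟩
  refine ⟨N, fun M hM => le_antisymm (hanti N M hM) ?_⟩
  rw [hN]
  exact Nat.sInf_le ⟨M, rfl⟩

set_option maxHeartbeats 1000000 in
set_option synthInstance.maxHeartbeats 400000 in
include hcompat in
/-- equality case: σ of a minimal spanning family is linearly independent. -/
lemma indep (M : ℕ) (hstab : ee k σL a (M + 1) = ee k σL a M)
    (c : Fin (ee k σL a M) → L) (hcK : ∀ t, c t ∈ KK k σL a (M + 1))
    (hc : ∀ x ∈ KK k σL a (M + 1), x ∈ Submodule.span ↥(KK k σL a M) (Set.range c)) :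
    LinearIndependent ↥(KK k σL a (M + 1)) (⇑σL ∘ c) := by
  letI := fieldKK σL a (k := k) (M + 1)
  rw [linearIndependent_iff_card_eq_finrank_span]
  have hspan : Submodule.span ↥(KK k σL a (M + 1)) (Set.range (⇑σL ∘ c))
      = VV k σL a (M + 1) := by
    apply le_antisymm
    · apply Submodule.span_le.2
      rintro y ⟨t, rfl⟩
      have : σL (c t) ∈ KK k σL a (M + 2) := mem_KK_sigma σk σL a hcompat (hcK t)
      exact Submodule.subset_span this
    · exact span_shift σk σL a hcompat M _ c hc
  rw [Fintype.card_fin]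
  show ee k σL a M = Module.finrank ↥(KK k σL a (M + 1))
    ↥(Submodule.span ↥(KK k σL a (M + 1)) (Set.range (⇑σL ∘ c)))
  rw [hspan]
  exact hstab.symm

end rank

section pol

variable {k L : Type*} [Field k] [Field L] [Algebra k L]
  (σk : k →+* k) (σL : L →+* L) {n : ℕ} (a : Fin n → L)

/-- the ideal generated by the relations of level `≤ M+1` and their shifts -/
noncomputable def JJ (M : ℕ) : Ideal (MvPolynomial (Fin n × ℕ) k) :=
  Ideal.span (((RR k n (M + 1) : Set (MvPolynomial (Fin n × ℕ) k))
      ∩ ↑(RingHom.ker (diffEval σL a (k := k))))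
    ∪ (⇑(diffPolyShift k σk n)) '' ((RR k n (M + 1) : Set (MvPolynomial (Fin n × ℕ) k))
      ∩ ↑(RingHom.ker (diffEval σL a (k := k)))))

/-- `f` is congruent mod `JJ M` to a combination `∑ gₜ σ(hₜ)` with `gₜ` of level `≤ M+1` -/
def Pred (M r : ℕ) (h : Fin r → MvPolynomial (Fin n × ℕ) k)
    (f : MvPolynomial (Fin n × ℕ) k) : Prop :=
  ∃ g : Fin r → MvPolynomial (Fin n × ℕ) k, (∀ t, g t ∈ RR k n (M + 1)) ∧
    f - ∑ t, g t * diffPolyShift k σk n (h t) ∈ JJ σk σL a M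

variable (hcompat : ∀ c : k, σL (algebraMap k L c) = algebraMap k L (σk c))

include hcompat in
lemma JJ_le_ker (M : ℕ) : JJ σk σL a M ≤ RingHom.ker (diffEval σL a (k := k)) := by
  apply Ideal.span_le.2
  rintro f (⟨-, hf⟩ | ⟨q, ⟨-, hq⟩, rfl⟩)
  · exact hf
  · exact ker_shift σk σL a hcompat hq

variable {M r : ℕ} {c : Fin r → L} {h : Fin r → MvPolynomial (Fin n × ℕ) k}

lemma claim1
    (hc : ∀ x ∈ KK k σL a (M + 1), x ∈ Submodule.span ↥(KK k σL a M) (Set.range c))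
    (hh : ∀ t, h t ∈ RR k n (M + 1)) (hεh : ∀ t, diffEval σL a (k := k) (h t) = c t)
    {p : MvPolynomial (Fin n × ℕ) k} (hp : p ∈ RR k n (M + 1)) :
    ∃ g : Fin r → MvPolynomial (Fin n × ℕ) k, (∀ t, g t ∈ RR k n M) ∧
      diffPolyShift k σk n p - ∑ t, diffPolyShift k σk n (g t) * diffPolyShift k σk n (h t)
        ∈ JJ σk σL a M := by
  have hεp : diffEval σL a (k := k) p ∈ KK k σL a (M + 1) := eval_mem σL a hp
  obtain ⟨w, hw⟩ := (mem_span_range_iff_exists_fun (R := ↥(KK k σL a M))).1 (hc _ hεp)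
  choose g hgR hge using fun t : Fin r => eval_surj σL a (k := k) (w t).2
  refine ⟨g, hgR, ?_⟩
  set q : MvPolynomial (Fin n × ℕ) k := p - ∑ t, g t * h t with hq
  have hqR : q ∈ RR k n (M + 1) :=
    sub_mem hp (Subalgebra.sum_mem _ fun t _ =>
      mul_mem (RR_mono (Nat.le_succ M) (hgR t)) (hh t))
  have hqker : diffEval σL a (k := k) q = 0 := by
    rw [hq, map_sub, map_sum]
    have : ∀ t : Fin r, diffEval σL a (k := k) (g t * h t) = (w t : L) * c t := by
      intro t
      rw [map_mul, hge t, hεh t]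
    rw [Finset.sum_congr rfl fun t _ => this t]
    have : ∑ t : Fin r, (w t : L) * c t = ∑ t : Fin r, w t • c t :=
      Finset.sum_congr rfl fun t _ => rfl
    rw [this, hw, sub_self]
  have hmem : diffPolyShift k σk n q ∈ JJ σk σL a M := by
    apply Ideal.subset_span
    exact Or.inr ⟨q, ⟨hqR, by rwa [SetLike.mem_coe, RingHom.mem_ker]⟩, rfl⟩
  have hqs : diffPolyShift k σk n q
      = diffPolyShift k σk n p
        - ∑ t, diffPolyShift k σk n (g t) * diffPolyShift k σk n (h t) := by
    rw [hq, map_sub, map_sum]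
    congr 1
    exact Finset.sum_congr rfl fun t _ => map_mul _ _ _
  rwa [← hqs]

lemma pred_congr {f f' : MvPolynomial (Fin n × ℕ) k} (hf : Pred σk σL a M r h f)
    (hd : f' - f ∈ JJ σk σL a M) : Pred σk σL a M r h f' := by
  obtain ⟨g, hgR, hgJ⟩ := hf
  refine ⟨g, hgR, ?_⟩
  have : f' - ∑ t, g t * diffPolyShift k σk n (h t)
      = (f' - f) + (f - ∑ t, g t * diffPolyShift k σk n (h t)) := by ring
  rw [this]
  exact add_mem hd hgJ

lemma pred_add {f f' : MvPolynomial (Fin n × ℕ) k} (hf : Pred σk σL a M r h f)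
    (hf' : Pred σk σL a M r h f') : Pred σk σL a M r h (f + f') := by
  obtain ⟨g, hgR, hgJ⟩ := hf
  obtain ⟨g', hg'R, hg'J⟩ := hf'
  refine ⟨fun t => g t + g' t, fun t => add_mem (hgR t) (hg'R t), ?_⟩
  have : f + f' - ∑ t, (g t + g' t) * diffPolyShift k σk n (h t)
      = (f - ∑ t, g t * diffPolyShift k σk n (h t))
        + (f' - ∑ t, g' t * diffPolyShift k σk n (h t)) := by
    have e1 : (∑ t, (g t + g' t) * diffPolyShift k σk n (h t))
        = ∑ t, (g t * diffPolyShift k σk n (h t) + g' t * diffPolyShift k σk n (h t)) :=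
      Finset.sum_congr rfl fun t _ => add_mul _ _ _
    rw [e1, Finset.sum_add_distrib]
    ring
  rw [this]
  exact add_mem hgJ hg'J

lemma pred_zero : Pred σk σL a M r h 0 :=
  ⟨fun _ => 0, fun _ => zero_mem _, by simp⟩

lemma pred_mulR {q f : MvPolynomial (Fin n × ℕ) k} (hq : q ∈ RR k n (M + 1))
    (hf : Pred σk σL a M r h f) : Pred σk σL a M r h (q * f) := by
  obtain ⟨g, hgR, hgJ⟩ := hf
  refine ⟨fun t => q * g t, fun t => mul_mem hq (hgR t), ?_⟩
  have : q * f - ∑ t, q * g t * diffPolyShift k σk n (h t)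
      = q * (f - ∑ t, g t * diffPolyShift k σk n (h t)) := by
    rw [mul_sub, Finset.mul_sum]
    congr 1
    exact Finset.sum_congr rfl fun t _ => (mul_assoc _ _ _)
  rw [this]
  exact Ideal.mul_mem_left _ _ hgJ

lemma pred_sum {ι : Type*} (s : Finset ι) (F : ι → MvPolynomial (Fin n × ℕ) k)
    (hF : ∀ i ∈ s, Pred σk σL a M r h (F i)) : Pred σk σL a M r h (∑ i ∈ s, F i) := by
  classical
  induction s using Finset.induction_on with
  | empty => simpa using pred_zero σk σL a
  | insert _ _ hnot ih =>
    rw [Finset.sum_insert hnot]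
    exact pred_add σk σL a (hF _ (Finset.mem_insert_self _ _))
      (ih fun i hi => hF i (Finset.mem_insert_of_mem hi))

lemma pred_sigma
    (hc : ∀ x ∈ KK k σL a (M + 1), x ∈ Submodule.span ↥(KK k σL a M) (Set.range c))
    (hh : ∀ t, h t ∈ RR k n (M + 1)) (hεh : ∀ t, diffEval σL a (k := k) (h t) = c t)
    {p : MvPolynomial (Fin n × ℕ) k} (hp : p ∈ RR k n (M + 1)) :
    Pred σk σL a M r h (diffPolyShift k σk n p) := by
  obtain ⟨g, hgR, hgJ⟩ := claim1 σk σL a hc hh hεh hp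
  exact ⟨fun t => diffPolyShift k σk n (g t),
    fun t => mem_RR_shift σk (hgR t), hgJ⟩

lemma pred_R
    (hc : ∀ x ∈ KK k σL a (M + 1), x ∈ Submodule.span ↥(KK k σL a M) (Set.range c))
    (hh : ∀ t, h t ∈ RR k n (M + 1)) (hεh : ∀ t, diffEval σL a (k := k) (h t) = c t)
    {f : MvPolynomial (Fin n × ℕ) k} (hf : f ∈ RR k n (M + 1)) :
    Pred σk σL a M r h f := by
  obtain ⟨g, hgR, hgJ⟩ := claim1 σk σL a hc hh hεh (one_mem (RR k n (M + 1)))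
  rw [map_one] at hgJ
  refine ⟨fun t => f * diffPolyShift k σk n (g t),
    fun t => mul_mem hf (mem_RR_shift σk (hgR t)), ?_⟩
  have : f - ∑ t, f * diffPolyShift k σk n (g t) * diffPolyShift k σk n (h t)
      = f * (1 - ∑ t, diffPolyShift k σk n (g t) * diffPolyShift k σk n (h t)) := by
    rw [mul_sub, mul_one, Finset.mul_sum]
    congr 1
    exact Finset.sum_congr rfl fun t _ => (mul_assoc _ _ _)
  rw [this]
  exact Ideal.mul_mem_left _ _ hgJ

lemma pred_mul_sigma
    (hc : ∀ x ∈ KK k σL a (M + 1), x ∈ Submodule.span ↥(KK k σL a M) (Set.range c))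
    (hh : ∀ t, h t ∈ RR k n (M + 1)) (hεh : ∀ t, diffEval σL a (k := k) (h t) = c t)
    {q f : MvPolynomial (Fin n × ℕ) k} (hq : q ∈ RR k n (M + 1))
    (hf : Pred σk σL a M r h f) : Pred σk σL a M r h (diffPolyShift k σk n q * f) := by
  obtain ⟨g, hgR, hgJ⟩ := hf
  have hterm : ∀ t : Fin r, Pred σk σL a M r h (g t * diffPolyShift k σk n (q * h t)) :=
    fun t => pred_mulR σk σL a (hgR t)
      (pred_sigma σk σL a hc hh hεh (mul_mem hq (hh t)))
  have hsum := pred_sum σk σL a Finset.univ _ (fun t _ => hterm t)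
  apply pred_congr σk σL a hsum
  have : diffPolyShift k σk n q * f - ∑ t, g t * diffPolyShift k σk n (q * h t)
      = diffPolyShift k σk n q * (f - ∑ t, g t * diffPolyShift k σk n (h t)) := by
    rw [mul_sub, Finset.mul_sum]
    refine congrArg (diffPolyShift k σk n q * f - ·) ?_
    refine Finset.sum_congr rfl fun t _ => ?_
    rw [map_mul]
    ring
  rw [this]
  exact Ideal.mul_mem_left _ _ hgJ

lemma pred_key
    (hc : ∀ x ∈ KK k σL a (M + 1), x ∈ Submodule.span ↥(KK k σL a M) (Set.range c))
    (hh : ∀ t, h t ∈ RR k n (M + 1)) (hεh : ∀ t, diffEval σL a (k := k) (h t) = c t)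
    {f : MvPolynomial (Fin n × ℕ) k} (hf : f ∈ RR k n (M + 2)) :
    Pred σk σL a M r h f := by
  induction hf using Algebra.adjoin_induction with
  | mem y hy =>
    obtain ⟨⟨m, i⟩, hp, rfl⟩ := hy
    simp only [Set.mem_setOf_eq] at hp
    rcases i with _ | i
    · exact pred_R σk σL a hc hh hεh
        (Algebra.subset_adjoin ⟨(m, 0), Nat.zero_le _, rfl⟩)
    · have : (MvPolynomial.X ((m : Fin n), i + 1) : MvPolynomial (Fin n × ℕ) k)
          = diffPolyShift k σk n (MvPolynomial.X (m, i)) := (shift_X σk (m, i)).symm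
      rw [this]
      exact pred_sigma σk σL a hc hh hεh
        (Algebra.subset_adjoin ⟨(m, i), Nat.succ_le_succ_iff.mp hp, rfl⟩)
  | algebraMap c' =>
    exact pred_R σk σL a hc hh hεh (Subalgebra.algebraMap_mem _ _)
  | add x y _ _ hx hy => exact pred_add σk σL a hx hy
  | mul x y _ _ hx hy =>
    obtain ⟨g, hgR, hgJ⟩ := hx
    have hterm : ∀ t : Fin r, Pred σk σL a M r h (g t * (diffPolyShift k σk n (h t) * y)) :=
      fun t => pred_mulR σk σL a (hgR t) (pred_mul_sigma σk σL a hc hh hεh (hh t) hy)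
    have hsum := pred_sum σk σL a Finset.univ _ (fun t _ => hterm t)
    apply pred_congr σk σL a hsum
    have : x * y - ∑ t, g t * (diffPolyShift k σk n (h t) * y)
        = (x - ∑ t, g t * diffPolyShift k σk n (h t)) * y := by
      rw [sub_mul, Finset.sum_mul]
      congr 1
      refine Finset.sum_congr rfl fun t _ => ?_
      ring
    rw [this]
    exact Ideal.mul_mem_right _ _ hgJ

end pol

section glue

variable {k L : Type*} [Field k] [Field L] [Algebra k L]
  (σk : k →+* k) (σL : L →+* L) {n : ℕ} (a : Fin n → L)

lemma exists_mem_RR (f : MvPolynomial (Fin n × ℕ) k) : ∃ M, f ∈ RR k n M := by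
  have hX : ∀ p : Fin n × ℕ, MvPolynomial.X p ∈ ⨆ M, RR k n M := fun p =>
    (le_iSup (RR k n) p.2) (Algebra.subset_adjoin ⟨p, show p.2 ≤ p.2 from le_refl _, rfl⟩)
  have htop : (⊤ : Subalgebra k (MvPolynomial (Fin n × ℕ) k)) ≤ ⨆ M, RR k n M := by
    rw [← MvPolynomial.adjoin_range_X]
    apply Algebra.adjoin_le
    rintro q ⟨p, rfl⟩
    exact hX p
  have hdir : Directed (· ≤ ·) (RR k n) := fun i j =>
    ⟨max i j, RR_mono (le_max_left _ _), RR_mono (le_max_right _ _)⟩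
  have hmem : f ∈ (↑(⨆ M, RR k n M) : Set (MvPolynomial (Fin n × ℕ) k)) :=
    htop (Algebra.mem_top (x := f))
  rw [Subalgebra.coe_iSup_of_directed hdir] at hmem
  simpa using hmem

end glue

end DFEP

open DFEP in
theorem diff_field_ext_finitely_presented {k L : Type*} [Field k] [Field L]
    [Algebra k L] [Algebra.IsAlgebraic k L]
    (σk : k →+* k) (σL : L →+* L)
    (hcompat : ∀ c : k, σL (algebraMap k L c) = algebraMap k L (σk c))
    {n : ℕ} (a : Fin n → L)
    (hgen : Algebra.adjoin k {x : L | ∃ (m : Fin n) (i : ℕ), x = (⇑σL)^[i] (a m)} = ⊤) :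
    ∃ B : Finset (MvPolynomial (Fin n × ℕ) k),
      (B : Set (MvPolynomial (Fin n × ℕ) k)) ⊆ RingHom.ker (diffEval σL a (k := k)) ∧
      Ideal.span (⋃ i : ℕ, (⇑(diffPolyShift k σk n))^[i] ''
          (B : Set (MvPolynomial (Fin n × ℕ) k)))
        = RingHom.ker (diffEval σL a (k := k)) := by
  classical
  obtain ⟨N, hN⟩ := ee_stab σk σL a hcompat
  -- Noetherian base ring at level N+1
  haveI hNoeth : IsNoetherianRing ↥(RR k n (N + 1)) := by
    have hfg : (RR k n (N + 1)).FG :=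
      Subalgebra.fg_def.2 ⟨_, Set.Finite.image _ (gen_finite (n := n) (N + 1)), rfl⟩
    haveI : Algebra.FiniteType k ↥(RR k n (N + 1)) := (Subalgebra.fg_iff_finiteType _).1 hfg
    exact Algebra.FiniteType.isNoetherianRing k _
  set I₀ : Ideal ↥(RR k n (N + 1)) :=
    RingHom.ker ((diffEval σL a (k := k)).comp (RR k n (N + 1)).val) with hI₀
  obtain ⟨G, hG⟩ := IsNoetherian.noetherian I₀
  set B : Finset (MvPolynomial (Fin n × ℕ) k) :=
    G.image (fun g => g.1) with hB
  set 𝔍 : Ideal (MvPolynomial (Fin n × ℕ) k) :=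
    Ideal.span (⋃ i : ℕ, (⇑(diffPolyShift k σk n))^[i] ''
      (B : Set (MvPolynomial (Fin n × ℕ) k))) with h𝔍
  have hBker : (B : Set (MvPolynomial (Fin n × ℕ) k))
      ⊆ ↑(RingHom.ker (diffEval σL a (k := k))) := by
    intro b hb
    rw [hB, Finset.coe_image] at hb
    obtain ⟨g, hgG, rfl⟩ := hb
    have hgI : g ∈ I₀ := by rw [← hG]; exact Ideal.subset_span hgG
    rw [hI₀, RingHom.mem_ker] at hgI
    exact hgI
  have h𝔍σ : ∀ x ∈ 𝔍, diffPolyShift k σk n x ∈ 𝔍 := by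
    intro x hx
    have h1 : diffPolyShift k σk n x ∈ Ideal.map (diffPolyShift k σk n) 𝔍 :=
      Ideal.mem_map_of_mem _ hx
    rw [h𝔍, Ideal.map_span] at h1
    refine Ideal.span_mono ?_ h1
    rintro y ⟨z, hz, rfl⟩
    simp only [Set.mem_iUnion] at hz ⊢
    obtain ⟨i, b, hb, rfl⟩ := hz
    exact ⟨i + 1, b, hb, Function.iterate_succ_apply' _ _ _⟩
  have hbase : ∀ f, f ∈ RR k n (N + 1) → f ∈ RingHom.ker (diffEval σL a (k := k)) → f ∈ 𝔍 := by
    intro f hfR hfk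
    have hf0 : (⟨f, hfR⟩ : ↥(RR k n (N + 1))) ∈ I₀ := by
      rw [hI₀, RingHom.mem_ker]
      exact hfk
    rw [← hG] at hf0
    have hf0' : (⟨f, hfR⟩ : ↥(RR k n (N + 1)))
        ∈ Ideal.span (↑G : Set ↥(RR k n (N + 1))) := hf0
    have h1 := Ideal.mem_map_of_mem ((RR k n (N + 1)).val.toRingHom) hf0'
    rw [Ideal.map_span] at h1
    have h2 : ((RR k n (N + 1)).val.toRingHom '' ↑G : Set (MvPolynomial (Fin n × ℕ) k))
        = ↑B := by
      rw [hB, Finset.coe_image]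
      rfl
    rw [h2] at h1
    refine Ideal.span_mono ?_ h1
    intro y hy
    rw [Set.mem_iUnion]
    exact ⟨0, by simpa using hy⟩
  have main : ∀ Mi, N ≤ Mi → ∀ f, f ∈ RR k n (Mi + 1) →
      f ∈ RingHom.ker (diffEval σL a (k := k)) → f ∈ 𝔍 := by
    intro Mi hMi
    induction Mi, hMi using Nat.le_induction with
    | base => exact hbase
    | succ M hM ih =>
      intro f hfR hfk
      obtain ⟨c, hcK, hc⟩ := exists_spanning σL a (k := k) M
      choose hfun hhR hhε using fun t => eval_surj σL a (k := k) (hcK t)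
      have hJJ : JJ σk σL a M ≤ 𝔍 := by
        apply Ideal.span_le.2
        rintro x (⟨hxR, hxk⟩ | ⟨q, ⟨hqR, hqk⟩, rfl⟩)
        · exact ih x hxR hxk
        · exact h𝔍σ _ (ih q hqR hqk)
      obtain ⟨g, hgR, hgJ⟩ := pred_key σk σL a hc hhR hhε hfR
      have hεdiff : diffEval σL a (k := k)
          (f - ∑ t, g t * diffPolyShift k σk n (hfun t)) = 0 :=
        JJ_le_ker σk σL a hcompat M hgJ
      have hsum0 : ∑ t, diffEval σL a (k := k) (g t) * σL (c t) = 0 := by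
        have he : diffEval σL a (k := k) (∑ t, g t * diffPolyShift k σk n (hfun t))
            = ∑ t, diffEval σL a (k := k) (g t) * σL (c t) := by
          rw [map_sum]
          refine Finset.sum_congr rfl fun t _ => ?_
          rw [map_mul, eval_shift σk σL a hcompat, hhε]
        rw [map_sub] at hεdiff
        have hf0 : diffEval σL a (k := k) f = 0 := hfk
        rw [hf0, zero_sub, neg_eq_zero] at hεdiff
        rw [← he, hεdiff]
      have hstab : ee k σL a (M + 1) = ee k σL a M :=
        (hN (M + 1) (Nat.le_succ_of_le hM)).trans (hN M hM).symm
      have hind := indep σk σL a hcompat M hstab c hcK hc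
      rw [Fintype.linearIndependent_iff] at hind
      set w : Fin (ee k σL a M) → ↥(KK k σL a (M + 1)) :=
        fun t => ⟨diffEval σL a (k := k) (g t), eval_mem σL a (hgR t)⟩ with hw
      have hw0 : ∀ t, w t = 0 := by
        apply hind
        have : ∀ t, w t • (⇑σL ∘ c) t = diffEval σL a (k := k) (g t) * σL (c t) :=
          fun t => rfl
        rw [Finset.sum_congr rfl fun t _ => this t]
        exact hsum0
      have hg0 : ∀ t, g t ∈ 𝔍 := by
        intro t
        apply ih (g t) (hgR t)
        rw [RingHom.mem_ker]
        have := hw0 t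
        rw [hw] at this
        exact congrArg Subtype.val this
      have hfsplit : f = (f - ∑ t, g t * diffPolyShift k σk n (hfun t))
          + ∑ t, g t * diffPolyShift k σk n (hfun t) := by ring
      rw [hfsplit]
      exact add_mem (hJJ hgJ)
        (Ideal.sum_mem _ fun t _ => Ideal.mul_mem_right _ _ (hg0 t))
  refine ⟨B, hBker, le_antisymm ?_ ?_⟩
  · apply Ideal.span_le.2
    intro x hx
    rw [Set.mem_iUnion] at hx
    obtain ⟨i, b, hb, rfl⟩ := hx
    induction i with
    | zero => exact hBker hb
    | succ i ihi =>
      rw [Function.iterate_succ_apply']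
      exact ker_shift σk σL a hcompat ihi
  · intro f hf
    obtain ⟨M0, hM0⟩ := exists_mem_RR f
    exact main (max M0 N) (le_max_right _ _) f
      (RR_mono (Nat.le_succ_of_le (le_max_left _ _)) hM0) hf
end
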